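/- arXiv:1101.2589 — 10 statements merged into one kernel-verified Lean document; each statement's English description precedes it below -/
import Mathlib

section
/- Let S be a finite union-closed family of finite sets with |S| = m ≥ 1. Then the total weight satisfies w(S) = ∑_{A ∈ S} |A| ≥ (m · log₂ m)/2, with equality if and only if S is the powerset of some finite set. -/
open Real Finset

section ReimerAux

variable {α : Type*} [DecidableEq α]

lemma N1real {a b : ℝ} (hb : 1 ≤ b) (hba : b ≤ a) :
    a * Real.log a + b * Real.log b + 2 * b * Real.log 2 ≤ (a + b) * Real.log (a + b) := by
  have hb0 : (0:ℝ) < b := lt_of_lt_of_le one_pos hb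
  set f : ℝ → ℝ := fun t => (t + b) * Real.log (t + b) - t * Real.log t with hf
  have hder : ∀ t ∈ Set.Icc b a, HasDerivAt f (Real.log (t + b) - Real.log t) t := by
    intro t ht
    have ht0 : (0:ℝ) < t := lt_of_lt_of_le hb0 ht.1
    have h1 : HasDerivAt (fun u : ℝ => u * Real.log u) (Real.log (t + b) + 1) (t + b) :=
      Real.hasDerivAt_mul_log (by positivity)
    have h2 : HasDerivAt (fun t : ℝ => (t + b) * Real.log (t + b)) (Real.log (t + b) + 1) t := by
      exact (h1.comp t ((hasDerivAt_id t).add_const b)).congr_deriv (g' := Real.log (t + b) + 1) (by ring)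
    have h3 : HasDerivAt (fun u : ℝ => u * Real.log u) (Real.log t + 1) t :=
      Real.hasDerivAt_mul_log (ne_of_gt ht0)
    exact (h2.sub h3).congr_deriv (by ring)
  have hmono : MonotoneOn f (Set.Icc b a) := by
    apply monotoneOn_of_deriv_nonneg (convex_Icc b a)
    · exact fun t ht => (hder t ht).continuousAt.continuousWithinAt
    · intro t ht
      have ht' : t ∈ Set.Icc b a := Set.mem_of_mem_of_subset ht interior_subset
      exact (hder t ht').differentiableAt.differentiableWithinAt
    · intro t ht
      have ht' : t ∈ Set.Icc b a := Set.mem_of_mem_of_subset ht interior_subset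
      rw [(hder t ht').deriv]
      have ht0 : (0:ℝ) < t := lt_of_lt_of_le hb0 ht'.1
      have := Real.log_le_log ht0 (by linarith : t ≤ t + b)
      linarith
  have key : f b ≤ f a := hmono (Set.left_mem_Icc.2 hba) (Set.right_mem_Icc.2 hba) hba
  have hfb : f b = 2 * b * Real.log 2 + b * Real.log b := by
    have : b + b = 2 * b := by ring
    rw [hf]; simp only [this]
    rw [Real.log_mul (by norm_num) (ne_of_gt hb0)]
    ring
  rw [hfb] at key
  simp only [hf] at key
  linarith

lemma N1 (a b : ℕ) (hba : b ≤ a) :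
    (a : ℝ) * Real.logb 2 a / 2 + (b : ℝ) * Real.logb 2 b / 2 + b ≤
      ((a + b : ℕ) : ℝ) * Real.logb 2 ((a + b : ℕ) : ℝ) / 2 := by
  rcases Nat.eq_zero_or_pos b with hb | hb
  · subst hb; simp
  · have hb1 : (1:ℝ) ≤ (b:ℝ) := by exact_mod_cast hb
    have hba' : (b:ℝ) ≤ (a:ℝ) := by exact_mod_cast hba
    have key := N1real hb1 hba'
    have hlog2 : (0:ℝ) < Real.log 2 := Real.log_pos (by norm_num)
    have h2l : (0:ℝ) < 2 * Real.log 2 := by positivity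
    simp only [Real.logb]
    push_cast
    have eA : (a:ℝ) * (Real.log a / Real.log 2) / 2 + (b:ℝ) * (Real.log b / Real.log 2) / 2
        + (b:ℝ) = ((a:ℝ) * Real.log a + b * Real.log b + 2*b*Real.log 2) / (2*Real.log 2) := by
      field_simp
    have eB : ((a:ℝ)+b) * (Real.log ((a:ℝ)+b) / Real.log 2) / 2 =
        (((a:ℝ)+b) * Real.log ((a:ℝ)+b)) / (2*Real.log 2) := by
      ring
    rw [eA, eB]
    exact (div_le_div_iff_of_pos_right h2l).2 key

lemma downset_weight {α : Type*} [DecidableEq α] :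
    ∀ (n : ℕ) (V : Finset α) (D : Finset (Finset α)), V.card ≤ n →
      (∀ E ∈ D, E ⊆ V) → (∀ E ∈ D, ∀ x ∈ E, E.erase x ∈ D) →
      (∑ E ∈ D, (E.card : ℝ)) ≤ (D.card : ℝ) * Real.logb 2 D.card / 2 := by
  intro n
  induction n with
  | zero =>
    intro V D hV hsub hdown
    have hV0 : V = ∅ := Finset.card_eq_zero.1 (Nat.le_zero.1 hV)
    have : ∀ E ∈ D, (E.card : ℝ) = 0 := by
      intro E hE
      have := hsub E hE
      rw [hV0, Finset.subset_empty] at this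
      simp [this]
    rw [Finset.sum_congr rfl this]
    have : (0:ℝ) ≤ (D.card : ℝ) * Real.logb 2 D.card / 2 := by
      rcases Nat.lt_or_ge D.card 1 with h | h
      · interval_cases h' : D.card <;> simp
      · have h1 : (1:ℝ) ≤ (D.card : ℝ) := by exact_mod_cast h
        have : 0 ≤ Real.logb 2 (D.card : ℝ) := Real.logb_nonneg (by norm_num) h1
        positivity
    simpa using this
  | succ n ih =>
    intro V D hV hsub hdown
    rcases Finset.eq_empty_or_nonempty V with hV0 | ⟨x, hx⟩
    · have : ∀ E ∈ D, (E.card : ℝ) = 0 := by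
        intro E hE
        have := hsub E hE
        rw [hV0, Finset.subset_empty] at this
        simp [this]
      rw [Finset.sum_congr rfl this]
      have : (0:ℝ) ≤ (D.card : ℝ) * Real.logb 2 D.card / 2 := by
        rcases Nat.lt_or_ge D.card 1 with h | h
        · interval_cases h' : D.card <;> simp
        · have h1 : (1:ℝ) ≤ (D.card : ℝ) := by exact_mod_cast h
          have : 0 ≤ Real.logb 2 (D.card : ℝ) := Real.logb_nonneg (by norm_num) h1
          positivity
      simpa using this
    · set D0 : Finset (Finset α) := D.filter (fun E => ¬ x ∈ E) with hD0
      set Dx : Finset (Finset α) := D.filter (fun E => x ∈ E) with hDx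
      set D1 : Finset (Finset α) := Dx.image (fun E => E.erase x) with hD1
      have hinjOn : Set.InjOn (fun E => Finset.erase E x) Dx := by
        intro E1 h1 E2 h2 h12
        have hx1 : x ∈ E1 := (Finset.mem_filter.1 h1).2
        have hx2 : x ∈ E2 := (Finset.mem_filter.1 h2).2
        rw [← Finset.insert_erase hx1, ← Finset.insert_erase hx2]
        simp only at h12
        rw [h12]
      have hcard1 : D1.card = Dx.card := Finset.card_image_of_injOn hinjOn
      have hsplit : Dx.card + D0.card = D.card := by
        rw [hDx, hD0]
        exact Finset.card_filter_add_card_filter_not (p := fun E => x ∈ E)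
      have hD1sub : D1 ⊆ D0 := by
        intro E hE
        rw [hD1] at hE
        obtain ⟨E', hE', rfl⟩ := Finset.mem_image.1 hE
        have hE'D : E' ∈ D := (Finset.mem_filter.1 hE').1
        have hxE' : x ∈ E' := (Finset.mem_filter.1 hE').2
        rw [hD0, Finset.mem_filter]
        exact ⟨hdown E' hE'D x hxE', Finset.notMem_erase x E'⟩
      have hble : D1.card ≤ D0.card := Finset.card_le_card hD1sub
      have hVcard : (V.erase x).card ≤ n := by
        rw [Finset.card_erase_of_mem hx]; omega
      have ih0 := ih (V.erase x) D0 hVcard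
        (by
          intro E hE
          rw [hD0, Finset.mem_filter] at hE
          exact Finset.subset_erase.2 ⟨hsub E hE.1, hE.2⟩)
        (by
          intro E hE y hy
          rw [hD0, Finset.mem_filter] at hE ⊢
          exact ⟨hdown E hE.1 y hy, fun hmem => hE.2 (Finset.mem_of_mem_erase hmem)⟩)
      have ih1 := ih (V.erase x) D1 hVcard
        (by
          intro E hE
          rw [hD1] at hE
          obtain ⟨E', hE', rfl⟩ := Finset.mem_image.1 hE
          exact Finset.erase_subset_erase x (hsub E' (Finset.mem_filter.1 hE').1))
        (by
          intro E hE y hy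
          rw [hD1] at hE ⊢
          obtain ⟨E', hE', rfl⟩ := Finset.mem_image.1 hE
          have hE'D : E' ∈ D := (Finset.mem_filter.1 hE').1
          have hxE' : x ∈ E' := (Finset.mem_filter.1 hE').2
          have hyE' : y ∈ E' := Finset.mem_of_mem_erase hy
          have hxy : x ≠ y := fun h => (Finset.notMem_erase x E') (h ▸ hy)
          refine Finset.mem_image.2 ⟨E'.erase y, ?_, ?_⟩
          · exact Finset.mem_filter.2 ⟨hdown E' hE'D y hyE',
              Finset.mem_erase.2 ⟨hxy, hxE'⟩⟩
          · rw [Finset.erase_right_comm])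
      rw [hcard1] at ih1 hble
      have hnum := N1 D0.card Dx.card hble
      have hwsum : (∑ E ∈ D, (E.card : ℝ)) =
          (∑ E ∈ D0, (E.card : ℝ)) + ((∑ E ∈ D1, (E.card : ℝ)) + Dx.card) := by
        have h1 : (∑ E ∈ D, (E.card : ℝ)) =
            (∑ E ∈ Dx, (E.card : ℝ)) + (∑ E ∈ D0, (E.card : ℝ)) := by
          rw [hD0, hDx]
          exact (Finset.sum_filter_add_sum_filter_not D (fun E => x ∈ E) _).symm
        have h2 : (∑ E ∈ D1, (E.card : ℝ)) = ∑ E ∈ Dx, ((E.erase x).card : ℝ) := by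
          rw [hD1]; exact Finset.sum_image (fun a ha b hb h => hinjOn ha hb h)
        have h3 : ∀ E ∈ Dx, ((E.erase x).card : ℝ) = (E.card : ℝ) - 1 := by
          intro E hE
          have hxE : x ∈ E := (Finset.mem_filter.1 hE).2
          rw [Finset.card_erase_of_mem hxE]
          have h1E : 1 ≤ E.card := Finset.card_pos.2 ⟨x, hxE⟩
          push_cast [Nat.cast_sub h1E]
          ring
        rw [h2, Finset.sum_congr rfl h3, Finset.sum_sub_distrib]
        rw [h1]
        simp
        ring
      rw [hwsum, ← hsplit]
      have hcast : ((Dx.card + D0.card : ℕ) : ℝ) = ((D0.card + Dx.card : ℕ) : ℝ) := by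
        push_cast; ring
      rw [hcast]
      linarith [ih0, ih1, hnum]

/-- Core compression induction: maintains (i) sandwich, (iii) disjoint intervals,
(iv) image closed under union with original sets; terminates in an "upset" image. -/
lemma compression_aux (S : Finset (Finset α)) (X : Finset α) :
    ∀ (k : ℕ) (φ : Finset α → Finset α),
      (∀ A ∈ S, A ⊆ φ A ∧ φ A ⊆ X) →
      (∀ A ∈ S, ∀ B ∈ S, A ≠ B → ∀ C : Finset α,
        A ⊆ C → C ⊆ φ A → B ⊆ C → C ⊆ φ B → False) →
      (∀ A ∈ S, ∀ B ∈ S, ∃ C ∈ S, φ C = φ A ∪ B) →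
      (∑ A ∈ S, (X.card - (φ A).card)) ≤ k →
      ∃ ψ : Finset α → Finset α,
        (∀ A ∈ S, A ⊆ ψ A ∧ ψ A ⊆ X) ∧
        (∀ A ∈ S, ∀ B ∈ S, A ≠ B → ∀ C : Finset α,
          A ⊆ C → C ⊆ ψ A → B ⊆ C → C ⊆ ψ B → False) ∧
        (∀ A ∈ S, ∀ x ∈ X, ∃ B ∈ S, ψ B = insert x (ψ A)) := by
  intro k
  induction k with
  | zero =>
    intro φ hi hdisj hiv hmeas
    refine ⟨φ, hi, hdisj, ?_⟩
    intro A hA x hx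
    -- measure zero: φ A = X for all A ∈ S
    have hzero : ∀ A ∈ S, X.card - (φ A).card = 0 := by
      intro A hA
      exact (Finset.sum_eq_zero_iff).1 (Nat.le_zero.1 hmeas) A hA
    have hXA : φ A = X := by
      have h1 : X.card ≤ (φ A).card := by have := hzero A hA; omega
      exact Finset.eq_of_subset_of_card_le (hi A hA).2 h1
    refine ⟨A, hA, ?_⟩
    rw [hXA, Finset.insert_eq_self.2 hx]
  | succ k ih =>
    intro φ hi hdisj hiv hmeas
    classical
    by_cases hup : ∀ A ∈ S, ∀ x ∈ X, ∃ B ∈ S, φ B = insert x (φ A)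
    · exact ⟨φ, hi, hdisj, hup⟩
    · push_neg at hup
      obtain ⟨A₀, hA₀, x, hx, hno⟩ := hup
      set φ' : Finset α → Finset α :=
        fun A => if ∃ B ∈ S, φ B = insert x (φ A) then φ A else insert x (φ A) with hφ'
      have hbranch : ∀ A, ((∃ B ∈ S, φ B = insert x (φ A)) ∧ φ' A = φ A) ∨
          ((¬ ∃ B ∈ S, φ B = insert x (φ A)) ∧ φ' A = insert x (φ A)) := by
        intro A
        by_cases h : ∃ B ∈ S, φ B = insert x (φ A)
        · exact Or.inl ⟨h, by rw [hφ']; simp [h]⟩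
        · exact Or.inr ⟨h, by rw [hφ']; simp [h]⟩
      have hsub1 : ∀ A, φ A ⊆ φ' A := by
        intro A
        rcases hbranch A with ⟨_, h⟩ | ⟨_, h⟩ <;> rw [h]
        · exact Finset.subset_insert x _
      have hsub2 : ∀ A, φ' A ⊆ insert x (φ A) := by
        intro A
        rcases hbranch A with ⟨_, h⟩ | ⟨_, h⟩ <;> rw [h]
        · exact Finset.subset_insert x _
      have hmoved_notmem : ∀ A ∈ S, (¬ ∃ B ∈ S, φ B = insert x (φ A)) → x ∉ φ A := by
        intro A hA hnoA hmem
        exact hnoA ⟨A, hA, by rw [Finset.insert_eq_self.2 hmem]⟩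
      -- invariant (i)
      have hi' : ∀ A ∈ S, A ⊆ φ' A ∧ φ' A ⊆ X := by
        intro A hA
        refine ⟨(hi A hA).1.trans (hsub1 A), (hsub2 A).trans ?_⟩
        exact Finset.insert_subset hx (hi A hA).2
      -- invariant (iii): disjoint intervals
      have hdisj' : ∀ A ∈ S, ∀ B ∈ S, A ≠ B → ∀ C : Finset α,
          A ⊆ C → C ⊆ φ' A → B ⊆ C → C ⊆ φ' B → False := by
        -- helper: the "A moved" case, general in A B
        have key : ∀ A ∈ S, ∀ B ∈ S, A ≠ B → ∀ C : Finset α,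
            A ⊆ C → C ⊆ φ' A → B ⊆ C → C ⊆ φ' B → x ∈ C →
            (¬ ∃ B' ∈ S, φ B' = insert x (φ A)) → False := by
          intro A hA B hB hAB C hAC hCA hBC hCB hxC hnoA
          have hxφA : x ∉ φ A := hmoved_notmem A hA hnoA
          have hxA : x ∉ A := fun h => hxφA ((hi A hA).1 h)
          set D := C.erase x with hD
          have hAD : A ⊆ D := fun y hy =>
            Finset.mem_erase.2 ⟨fun h => hxA (h ▸ hy), hAC hy⟩
          have hDφA : D ⊆ φ A := by
            intro y hy
            have hyC : y ∈ C := Finset.mem_of_mem_erase hy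
            have hyx : y ≠ x := (Finset.mem_erase.1 hy).1
            have := (hsub2 A) (hCA hyC)
            rcases Finset.mem_insert.1 this with h | h
            · exact absurd h hyx
            · exact h
          by_cases hxB : x ∈ B
          · -- then φ A ∪ B = insert x (φ A), contradicting hnoA via (iv)
            have hBD : B.erase x ⊆ D := fun y hy =>
              Finset.mem_erase.2 ⟨(Finset.mem_erase.1 hy).1, hBC (Finset.mem_of_mem_erase hy)⟩
            have hBφA : B.erase x ⊆ φ A := hBD.trans hDφA
            have hunion : φ A ∪ B = insert x (φ A) := by
              apply Finset.Subset.antisymm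
              · intro y hy
                rcases Finset.mem_union.1 hy with h | h
                · exact Finset.mem_insert_of_mem h
                · by_cases hyx : y = x
                  · rw [hyx]; exact Finset.mem_insert_self x _
                  · exact Finset.mem_insert_of_mem
                      (hBφA (Finset.mem_erase.2 ⟨hyx, h⟩))
              · intro y hy
                rcases Finset.mem_insert.1 hy with h | h
                · exact h ▸ Finset.mem_union_right _ hxB
                · exact Finset.mem_union_left _ h
            obtain ⟨C₀, hC₀, hφC₀⟩ := hiv A hA B hB
            exact hnoA ⟨C₀, hC₀, by rw [hφC₀, hunion]⟩
          · -- x ∉ B: old intervals of A and B both contain D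
            have hBD : B ⊆ D := fun y hy =>
              Finset.mem_erase.2 ⟨fun h => hxB (h ▸ hy), hBC hy⟩
            have hDφB : D ⊆ φ B := by
              intro y hy
              have hyC : y ∈ C := Finset.mem_of_mem_erase hy
              have hyx : y ≠ x := (Finset.mem_erase.1 hy).1
              have := (hsub2 B) (hCB hyC)
              rcases Finset.mem_insert.1 this with h | h
              · exact absurd h hyx
              · exact h
            exact hdisj A hA B hB hAB D hAD hDφA hBD hDφB
        intro A hA B hB hAB C hAC hCA hBC hCB
        by_cases hxC : x ∈ C
        · rcases hbranch A with ⟨hexA, heqA⟩ | ⟨hnoA, _⟩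
          · rcases hbranch B with ⟨hexB, heqB⟩ | ⟨hnoB, _⟩
            · exact hdisj A hA B hB hAB C hAC (heqA ▸ hCA) hBC (heqB ▸ hCB)
            · exact key B hB A hA (Ne.symm hAB) C hBC hCB hAC hCA hxC hnoB
          · exact key A hA B hB hAB C hAC hCA hBC hCB hxC hnoA
        · -- x ∉ C: C lies in both old intervals
          have h1 : C ⊆ φ A := by
            intro y hy
            rcases Finset.mem_insert.1 ((hsub2 A) (hCA hy)) with h | h
            · exact absurd (h ▸ hy) hxC
            · exact h
          have h2 : C ⊆ φ B := by
            intro y hy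
            rcases Finset.mem_insert.1 ((hsub2 B) (hCB hy)) with h | h
            · exact absurd (h ▸ hy) hxC
            · exact h
          exact hdisj A hA B hB hAB C hAC h1 hBC h2
      -- invariant (iv)
      have hiv' : ∀ A ∈ S, ∀ B ∈ S, ∃ C ∈ S, φ' C = φ' A ∪ B := by
        intro A hA B hB
        obtain ⟨C₁, hC₁, hφC₁⟩ := hiv A hA B hB
        have hkeepmem : ∀ Y ∈ S, x ∈ φ Y → φ' Y = φ Y := by
          intro Y hY hxY
          rcases hbranch Y with ⟨_, h⟩ | ⟨hnoY, _⟩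
          · exact h
          · exact absurd hxY (hmoved_notmem Y hY hnoY)
        rcases hbranch A with ⟨hexA, heqA⟩ | ⟨hnoA, heqA⟩
        · -- A kept
          rw [heqA, ← hφC₁]
          by_cases hxW : x ∈ φ C₁
          · exact ⟨C₁, hC₁, hkeepmem C₁ hC₁ hxW⟩
          · by_cases hins : ∃ B' ∈ S, φ B' = insert x (φ C₁)
            · rcases hbranch C₁ with ⟨_, h⟩ | ⟨hnoC₁, _⟩
              · exact ⟨C₁, hC₁, h⟩
              · exact absurd hins hnoC₁
            · -- contradiction: insert x (φ C₁) = φ C₃ ∪ B ∈ image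
              exfalso
              obtain ⟨C₃, hC₃, hφC₃⟩ := hexA
              obtain ⟨C₄, hC₄, hφC₄⟩ := hiv C₃ hC₃ B hB
              apply hins
              refine ⟨C₄, hC₄, ?_⟩
              rw [hφC₄, hφC₃, hφC₁]
              rw [Finset.insert_union]
        · -- A moved
          rw [heqA]
          have hW' : insert x (φ A) ∪ B = insert x (φ C₁) := by
            rw [Finset.insert_union, hφC₁]
          rw [hW']
          by_cases hx1 : x ∈ φ C₁
          · rw [Finset.insert_eq_self.2 hx1]
            exact ⟨C₁, hC₁, hkeepmem C₁ hC₁ hx1⟩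
          · by_cases hins : ∃ B' ∈ S, φ B' = insert x (φ C₁)
            · obtain ⟨C₄, hC₄, hφC₄⟩ := hins
              have : x ∈ φ C₄ := by rw [hφC₄]; exact Finset.mem_insert_self x _
              exact ⟨C₄, hC₄, by rw [hkeepmem C₄ hC₄ this, hφC₄]⟩
            · rcases hbranch C₁ with ⟨hexC₁, _⟩ | ⟨_, h⟩
              · exact absurd hexC₁ hins
              · exact ⟨C₁, hC₁, h⟩
      -- measure decreases
      have hnoA₀ : ¬ ∃ B ∈ S, φ B = insert x (φ A₀) := by
        rintro ⟨B, hB, hφB⟩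
        exact hno B hB hφB
      have hxφA₀ : x ∉ φ A₀ := hmoved_notmem A₀ hA₀ hnoA₀
      have heqA₀ : φ' A₀ = insert x (φ A₀) := by
        rcases hbranch A₀ with ⟨hex, _⟩ | ⟨_, h⟩
        · exact absurd hex hnoA₀
        · exact h
      have hmeas' : (∑ A ∈ S, (X.card - (φ' A).card)) < ∑ A ∈ S, (X.card - (φ A).card) := by
        apply Finset.sum_lt_sum
        · intro A hA
          have : (φ A).card ≤ (φ' A).card := Finset.card_le_card (hsub1 A)
          omega
        · refine ⟨A₀, hA₀, ?_⟩
          have h1 : (φ' A₀).card = (φ A₀).card + 1 := by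
            rw [heqA₀, Finset.card_insert_of_notMem hxφA₀]
          have h2 : (φ A₀).card < X.card := by
            apply Finset.card_lt_card
            exact Finset.ssubset_iff_of_subset (hi A₀ hA₀).2 |>.2 ⟨x, hx, hxφA₀⟩
          omega
      exact ih φ' hi' hdisj' hiv' (by omega)

lemma two_mul_sum_card_powerset (Ω : Finset α) :
    2 * (∑ A ∈ Ω.powerset, A.card) = Ω.card * 2 ^ Ω.card := by
  classical
  induction Ω using Finset.induction_on with
  | empty => simp
  | @insert a s ha ih =>
    rw [Finset.powerset_insert, Finset.sum_union]
    · have himg : ∑ A ∈ s.powerset.image (insert a), A.card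
          = (∑ A ∈ s.powerset, A.card) + 2 ^ s.card := by
        rw [Finset.sum_image]
        · have : ∀ A ∈ s.powerset, (insert a A).card = A.card + 1 := by
            intro A hA
            exact Finset.card_insert_of_notMem
              (fun h => ha ((Finset.mem_powerset.1 hA) h))
          rw [Finset.sum_congr rfl this, Finset.sum_add_distrib, Finset.sum_const,
            Finset.card_powerset, smul_eq_mul, mul_one]
        · intro A hA B hB h
          have hA' : a ∉ A := fun hc => ha ((Finset.mem_powerset.1 hA) hc)
          have hB' : a ∉ B := fun hc => ha ((Finset.mem_powerset.1 hB) hc)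
          rw [← Finset.erase_insert hA', ← Finset.erase_insert hB', h]
      rw [himg, Finset.card_insert_of_notMem ha]
      have : 2 * ((∑ A ∈ s.powerset, A.card) + ((∑ A ∈ s.powerset, A.card) + 2 ^ s.card))
          = 2 * (2 * ∑ A ∈ s.powerset, A.card) + 2 ^ s.card * 2 := by ring
      rw [this, ih]
      ring
    · rw [Finset.disjoint_left]
      intro A hA hA'
      obtain ⟨B, hB, rfl⟩ := Finset.mem_image.1 hA'
      exact ha ((Finset.mem_powerset.1 hA) (Finset.mem_insert_self a B))

lemma exists_top (S : Finset (Finset α)) (hne : S.Nonempty)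
    (huc : ∀ A ∈ S, ∀ B ∈ S, A ∪ B ∈ S) : ∃ M ∈ S, ∀ A ∈ S, A ⊆ M := by
  obtain ⟨M, hM, hMmax⟩ := S.exists_max_image Finset.card hne
  refine ⟨M, hM, fun A hA => ?_⟩
  have h1 : A ∪ M ∈ S := huc A hA M hM
  have h2 : A ∪ M = M := by
    apply Finset.eq_of_subset_of_card_le ?_ ?_ |>.symm
    · exact Finset.subset_union_right
    · exact hMmax _ h1
  exact h2 ▸ Finset.subset_union_left

end ReimerAux

/-- tangent line to `2^t` at `t = c`. -/
lemma tangent_le (c t : ℝ) :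
    Real.log 2 * (2:ℝ)^c * (t - c) + (2:ℝ)^c ≤ (2:ℝ)^t := by
  have h1 : (2:ℝ)^t = (2:ℝ)^c * Real.exp (Real.log 2 * (t - c)) := by
    rw [Real.rpow_def_of_pos two_pos, Real.rpow_def_of_pos two_pos, ← Real.exp_add]
    ring_nf
  rw [h1]
  have h2 : Real.log 2 * (t - c) + 1 ≤ Real.exp (Real.log 2 * (t - c)) :=
    Real.add_one_le_exp _
  have h3 : (0:ℝ) < (2:ℝ)^c := Real.rpow_pos_of_pos two_pos c
  nlinarith

lemma tangent_lt (c t : ℝ) (h : t ≠ c) :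
    Real.log 2 * (2:ℝ)^c * (t - c) + (2:ℝ)^c < (2:ℝ)^t := by
  have h1 : (2:ℝ)^t = (2:ℝ)^c * Real.exp (Real.log 2 * (t - c)) := by
    rw [Real.rpow_def_of_pos two_pos, Real.rpow_def_of_pos two_pos, ← Real.exp_add]
    ring_nf
  rw [h1]
  have hne : Real.log 2 * (t - c) ≠ 0 := by
    have : Real.log 2 ≠ 0 := ne_of_gt (Real.log_pos (by norm_num))
    exact mul_ne_zero this (sub_ne_zero.2 h)
  have h2 : Real.log 2 * (t - c) + 1 < Real.exp (Real.log 2 * (t - c)) :=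
    Real.add_one_lt_exp hne
  have h3 : (0:ℝ) < (2:ℝ)^c := Real.rpow_pos_of_pos two_pos c
  nlinarith

set_option maxHeartbeats 1000000 in
/-- **Reimer's Average Set Size Theorem.**
If `S` is a union-closed family of finite sets with `|S| = m ≥ 1`, then
`∑_{A ∈ S} |A| ≥ (m · log₂ m)/2`, with equality iff `S` is the powerset of
some finite set. -/
theorem reimer_average_set_size {α : Type*} [DecidableEq α]
    (S : Finset (Finset α)) (m : ℕ) (hm : S.card = m) (hm1 : 1 ≤ m)
    (huc : ∀ A ∈ S, ∀ B ∈ S, A ∪ B ∈ S) :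
    (m : ℝ) * Real.logb 2 m / 2 ≤ ∑ A ∈ S, (A.card : ℝ) ∧
      ((∑ A ∈ S, (A.card : ℝ)) = (m : ℝ) * Real.logb 2 m / 2 ↔
        ∃ Ω : Finset α, S = Ω.powerset) := by
  classical
  -- the "powerset ⇒ equality" direction
  have hpow : ∀ Ω : Finset α, S = Ω.powerset →
      (∑ A ∈ S, (A.card:ℝ)) = (m:ℝ) * Real.logb 2 m / 2 := by
    intro Ω hΩ
    subst hΩ
    have hm2 : m = 2 ^ Ω.card := by rw [← hm, Finset.card_powerset]
    have h2 := two_mul_sum_card_powerset Ω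
    have hcast : 2 * (∑ A ∈ Ω.powerset, (A.card:ℝ)) = (Ω.card:ℝ) * 2 ^ Ω.card := by
      exact_mod_cast congrArg (Nat.cast : ℕ → ℝ) h2
    have hlogb : Real.logb 2 ((m:ℝ)) = (Ω.card : ℝ) := by
      have : ((m:ℕ):ℝ) = (2:ℝ) ^ (Ω.card:ℕ) := by rw [hm2]; push_cast; ring
      rw [this, Real.logb_pow 2 2 Ω.card, Real.logb_self_eq_one (by norm_num), mul_one]
    have hmr : ((m:ℕ):ℝ) = (2:ℝ) ^ (Ω.card:ℕ) := by rw [hm2]; push_cast; ring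
    rw [hlogb, hmr]
    linarith [hcast]
  -- main construction
  have hne : S.Nonempty := Finset.card_pos.1 (by omega)
  obtain ⟨X, hXS, hXtop⟩ := exists_top S hne huc
  set n := X.card with hn
  obtain ⟨ψ, hi, hdisj, hupset⟩ := compression_aux S X (∑ A ∈ S, (X.card - A.card)) id
    (fun A hA => ⟨subset_rfl, hXtop A hA⟩)
    (by
      intro A hA B hB hAB C hAC hCA hBC hCB
      simp only [id] at hCA hCB
      exact hAB ((Finset.Subset.antisymm hAC hCA).trans
        (Finset.Subset.antisymm hBC hCB).symm))
    (fun A hA B hB => ⟨A ∪ B, huc A hA B hB, rfl⟩)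
    le_rfl
  have hψX : ψ X = X := Finset.Subset.antisymm (hi X hXS).2 (hi X hXS).1
  have hψinj : Set.InjOn ψ S := by
    intro A hA B hB h
    by_contra hne'
    exact hdisj A hA B hB hne' (ψ A) (hi A hA).1 subset_rfl
      (h ▸ (hi B hB).1) (le_of_eq h)
  set d : Finset α → ℕ := fun A => (ψ A).card - A.card with hd
  have hcard : ∀ A ∈ S, (ψ A).card = A.card + d A := by
    intro A hA
    have := Finset.card_le_card (hi A hA).1
    simp only [hd]
    omega
  -- disjoint intervals give the packing bound
  have hNat : (∑ A ∈ S, 2 ^ (d A)) ≤ 2 ^ n := by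
    set I : Finset α → Finset (Finset α) :=
      fun A => ((ψ A \ A).powerset).image (fun U => A ∪ U) with hI
    have hmemI : ∀ A ∈ S, ∀ C : Finset α, C ∈ I A ↔ A ⊆ C ∧ C ⊆ ψ A := by
      intro A hA C
      constructor
      · intro hC
        obtain ⟨U, hU, rfl⟩ := Finset.mem_image.1 hC
        have hU' : U ⊆ ψ A \ A := Finset.mem_powerset.1 hU
        refine ⟨Finset.subset_union_left, Finset.union_subset (hi A hA).1 ?_⟩
        exact hU'.trans (Finset.sdiff_subset)
      · rintro ⟨h1, h2⟩
        refine Finset.mem_image.2 ⟨C \ A, Finset.mem_powerset.2 ?_, ?_⟩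
        · exact Finset.sdiff_subset_sdiff h2 subset_rfl
        · rw [Finset.union_sdiff_of_subset h1]
    have hcardI : ∀ A ∈ S, (I A).card = 2 ^ (d A) := by
      intro A hA
      rw [hI]
      simp only
      rw [Finset.card_image_of_injOn, Finset.card_powerset,
        Finset.card_sdiff_of_subset (hi A hA).1]
      intro U hU V hV hUV
      have hU' : U ⊆ ψ A \ A := Finset.mem_powerset.1 hU
      have hV' : V ⊆ ψ A \ A := Finset.mem_powerset.1 hV
      have hdU : Disjoint A U := Finset.disjoint_left.2
        (fun {y} hyA hyU => (Finset.mem_sdiff.1 (hU' hyU)).2 hyA)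
      have hdV : Disjoint A V := Finset.disjoint_left.2
        (fun {y} hyA hyV => (Finset.mem_sdiff.1 (hV' hyV)).2 hyA)
      rw [← Finset.union_sdiff_cancel_left hdU, ← Finset.union_sdiff_cancel_left hdV]
      exact congrArg (fun t => t \ A) hUV
    have hdisjI : ∀ A ∈ S, ∀ B ∈ S, A ≠ B → Disjoint (I A) (I B) := by
      intro A hA B hB hAB
      rw [Finset.disjoint_left]
      intro C hCA hCB
      have h1 := (hmemI A hA C).1 hCA
      have h2 := (hmemI B hB C).1 hCB
      exact hdisj A hA B hB hAB C h1.1 h1.2 h2.1 h2.2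
    have hbsub : S.biUnion I ⊆ X.powerset := by
      intro C hC
      obtain ⟨A, hA, hCA⟩ := Finset.mem_biUnion.1 hC
      exact Finset.mem_powerset.2 (((hmemI A hA C).1 hCA).2.trans (hi A hA).2)
    calc (∑ A ∈ S, 2 ^ (d A)) = ∑ A ∈ S, (I A).card := by
          exact (Finset.sum_congr rfl hcardI).symm
      _ = (S.biUnion I).card := (Finset.card_biUnion hdisjI).symm
      _ ≤ (X.powerset).card := Finset.card_le_card hbsub
      _ = 2 ^ n := Finset.card_powerset X
  -- Harper bound via complements
  set D : Finset (Finset α) := S.image (fun A => X \ ψ A) with hD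
  have hinjD : Set.InjOn (fun A => X \ ψ A) S := by
    intro A hA B hB h
    apply hψinj hA hB
    have h' : X \ ψ A = X \ ψ B := h
    have h1 : X \ (X \ ψ A) = X \ (X \ ψ B) := by rw [h']
    rwa [Finset.sdiff_sdiff_eq_self (hi A hA).2, Finset.sdiff_sdiff_eq_self (hi B hB).2] at h1
  have hcardD : D.card = m := by rw [hD, Finset.card_image_of_injOn hinjD, hm]
  have hDsub : ∀ E ∈ D, E ⊆ X := by
    intro E hE
    obtain ⟨A, hA, rfl⟩ := Finset.mem_image.1 hE
    exact Finset.sdiff_subset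
  have hDdown : ∀ E ∈ D, ∀ y ∈ E, E.erase y ∈ D := by
    intro E hE y hy
    obtain ⟨A, hA, rfl⟩ := Finset.mem_image.1 hE
    have hyX : y ∈ X := (Finset.mem_sdiff.1 hy).1
    obtain ⟨B, hB, hφB⟩ := hupset A hA y hyX
    refine Finset.mem_image.2 ⟨B, hB, ?_⟩
    rw [hφB]
    ext z
    simp only [Finset.mem_erase, Finset.mem_sdiff, Finset.mem_insert]
    tauto
  have hHarper := downset_weight n X D le_rfl hDsub hDdown
  -- real bookkeeping
  set w : ℝ := ∑ A ∈ S, (A.card : ℝ) with hw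
  set sd : ℝ := ∑ A ∈ S, (d A : ℝ) with hsd
  have hwT : (∑ A ∈ S, ((ψ A).card : ℝ)) = w + sd := by
    rw [hw, hsd, ← Finset.sum_add_distrib]
    apply Finset.sum_congr rfl
    intro A hA
    rw [← Nat.cast_add]
    exact_mod_cast congrArg (Nat.cast : ℕ → ℝ) (hcard A hA)
  have hwD : (∑ E ∈ D, (E.card:ℝ)) = (m:ℝ) * n - (w + sd) := by
    have hsi : (∑ E ∈ D, (E.card:ℝ)) = ∑ A ∈ S, ((X \ ψ A).card : ℝ) := by
      rw [hD]
      exact Finset.sum_image (fun A hA B hB h => hinjD hA hB h)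
    rw [hsi]
    have : ∀ A ∈ S, ((X \ ψ A).card : ℝ) = (n:ℝ) - ((ψ A).card : ℝ) := by
      intro A hA
      rw [Finset.card_sdiff_of_subset (hi A hA).2]
      have := Finset.card_le_card (hi A hA).2
      push_cast [Nat.cast_sub this]
      ring
    rw [Finset.sum_congr rfl this, Finset.sum_sub_distrib, Finset.sum_const, hwT, hm]
    push_cast
    ring
  have hm0 : (0:ℝ) < (m:ℝ) := by exact_mod_cast hm1
  set c : ℝ := (n:ℝ) - Real.logb 2 m with hc
  have h2c : (2:ℝ) ^ c = (2:ℝ)^(n:ℝ) / m := by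
    rw [hc, Real.rpow_sub two_pos, Real.rpow_logb two_pos (by norm_num) hm0]
  have h2cpos : (0:ℝ) < (2:ℝ)^c := Real.rpow_pos_of_pos two_pos c
  have hlog2pos : (0:ℝ) < Real.log 2 := Real.log_pos (by norm_num)
  have hm2c : (m:ℝ) * (2:ℝ)^c = (2:ℝ)^(n:ℝ) := by
    rw [h2c]
    field_simp
  have hSum2 : (∑ A ∈ S, (2:ℝ)^((d A : ℕ):ℝ)) ≤ (2:ℝ)^((n:ℕ):ℝ) := by
    have e1 : ∀ A ∈ S, (2:ℝ)^((d A : ℕ):ℝ) = ((2^(d A) : ℕ):ℝ) := by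
      intro A hA
      rw [Real.rpow_natCast]
      push_cast
      ring
    have e2 : (2:ℝ)^((n:ℕ):ℝ) = ((2^n : ℕ):ℝ) := by
      rw [Real.rpow_natCast]; push_cast; ring
    rw [Finset.sum_congr rfl e1, e2, ← Nat.cast_sum]
    exact_mod_cast hNat
  -- tangent-line Jensen: sd ≤ m * c
  have htansum : Real.log 2 * (2:ℝ)^c * (sd - (m:ℝ) * c) + (m:ℝ) * (2:ℝ)^c ≤
      ∑ A ∈ S, (2:ℝ)^((d A : ℕ):ℝ) := by
    have : ∀ A ∈ S, Real.log 2 * (2:ℝ)^c * ((d A : ℝ) - c) + (2:ℝ)^c ≤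
        (2:ℝ)^((d A : ℕ):ℝ) := fun A hA => tangent_le c _
    have hsum := Finset.sum_le_sum this
    rw [Finset.sum_add_distrib, Finset.sum_const, hm, nsmul_eq_mul] at hsum
    calc Real.log 2 * (2:ℝ)^c * (sd - (m:ℝ) * c) + (m:ℝ) * (2:ℝ)^c
        = (∑ A ∈ S, (Real.log 2 * (2:ℝ)^c * ((d A : ℝ) - c))) + (m:ℝ) * (2:ℝ)^c := by
          rw [← Finset.mul_sum, hsd]
          rw [Finset.sum_sub_distrib, Finset.sum_const, hm]
          push_cast
          ring
      _ ≤ _ := by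
          push_cast at hsum ⊢
          linarith
  have hsd_le : sd ≤ (m:ℝ) * c := by
    have h1 : Real.log 2 * (2:ℝ)^c * (sd - (m:ℝ) * c) ≤ 0 := by
      have := htansum.trans hSum2
      push_cast at this
      nlinarith [hm2c]
    nlinarith [mul_pos hlog2pos h2cpos]
  -- final inequality
  have hHarper' : (m:ℝ) * n - (w + sd) ≤ (m:ℝ) * Real.logb 2 m / 2 := by
    rw [← hwD]
    have : ((D.card : ℕ):ℝ) = (m:ℝ) := by rw [hcardD]
    calc (∑ E ∈ D, (E.card:ℝ)) ≤ (D.card : ℝ) * Real.logb 2 D.card / 2 := hHarper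
      _ = (m:ℝ) * Real.logb 2 m / 2 := by rw [this]
  have hmain : (m:ℝ) * Real.logb 2 m / 2 ≤ w := by
    have hexp : (m:ℝ) * c = (m:ℝ) * n - (m:ℝ) * Real.logb 2 m := by rw [hc]; ring
    nlinarith [hsd_le, hHarper']
  refine ⟨hmain, ?_, fun ⟨Ω, hΩ⟩ => hpow Ω hΩ⟩
  -- equality ⇒ powerset
  intro heq
  have hsd_ge : (m:ℝ) * c ≤ sd := by
    have hexp : (m:ℝ) * c = (m:ℝ) * n - (m:ℝ) * Real.logb 2 m := by rw [hc]; ring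
    nlinarith [hHarper']
  have hsd_eq : sd = (m:ℝ) * c := le_antisymm hsd_le hsd_ge
  -- per-term tangent equality
  set g : Finset α → ℝ :=
    fun A => (2:ℝ)^((d A : ℕ):ℝ) - (Real.log 2 * (2:ℝ)^c * ((d A : ℝ) - c) + (2:ℝ)^c)
    with hg
  have hg_nonneg : ∀ A ∈ S, 0 ≤ g A := by
    intro A hA
    rw [hg]
    have := tangent_le c ((d A : ℕ):ℝ)
    simp only
    linarith
  have hg_sum0 : (∑ A ∈ S, g A) = 0 := by
    have hle : (∑ A ∈ S, g A) ≤ 0 := by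
      have e1 : (∑ A ∈ S, (Real.log 2 * (2:ℝ)^c * (((d A : ℕ):ℝ) - c)))
          = Real.log 2 * (2:ℝ)^c * (sd - (m:ℝ)*c) := by
        rw [← Finset.mul_sum, Finset.sum_sub_distrib, Finset.sum_const, hm, nsmul_eq_mul, ← hsd]
      have hgsum_eq : (∑ A ∈ S, g A) = (∑ A ∈ S, (2:ℝ)^((d A:ℕ):ℝ)) -
          (Real.log 2 * (2:ℝ)^c * (sd - (m:ℝ)*c) + (m:ℝ)*(2:ℝ)^c) := by
        rw [hg]
        rw [Finset.sum_sub_distrib, Finset.sum_add_distrib, e1, Finset.sum_const, hm,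
          nsmul_eq_mul]
      rw [hgsum_eq, hsd_eq]
      have h2 := hSum2
      push_cast at h2 ⊢
      nlinarith [hm2c]
    exact le_antisymm hle (Finset.sum_nonneg hg_nonneg)
  have hg0 : ∀ A ∈ S, g A = 0 :=
    (Finset.sum_eq_zero_iff_of_nonneg hg_nonneg).1 hg_sum0
  have hdc : ∀ A ∈ S, ((d A : ℕ):ℝ) = c := by
    intro A hA
    by_contra hne'
    have := tangent_lt c ((d A : ℕ):ℝ) hne'
    have h0 := hg0 A hA
    rw [hg] at h0
    simp only at h0
    linarith
  have hdX : d X = 0 := by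
    simp only [hd]
    rw [hψX]
    omega
  have hc0 : c = 0 := by
    have := hdc X hXS
    rw [hdX] at this
    simpa using this.symm
  have hlogbn : Real.logb 2 (m:ℝ) = (n:ℝ) := by
    rw [hc] at hc0
    linarith
  have hmn : m = 2 ^ n := by
    have h1 : (m:ℝ) = (2:ℝ)^((n:ℕ):ℝ) := by
      rw [← Real.rpow_logb two_pos (by norm_num) hm0, hlogbn]
    rw [Real.rpow_natCast] at h1
    exact_mod_cast h1
  refine ⟨X, Finset.eq_of_subset_of_card_le
    (fun A hA => Finset.mem_powerset.2 (hXtop A hA)) ?_⟩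
  rw [Finset.card_powerset, hm, ← hmn]
end

section
/- Let S be a separating union-closed family of subsets of [n] = {1,...,n} whose elements are labeled in order of increasing degree, i.e., d_S(i) ≤ d_S(j) whenever i ≤ j. Then for every i ∈ [n−1], S contains a set A_i of the form A_i = ({i+1, i+2, ..., n}) ∪ X_i where X_i ⊆ [i−1] (in particular i ∉ A_i and {i+1,...,n} ⊆ A_i), and these n−1 sets A_1, ..., A_{n−1} are pairwise distinct. -/
/-- If `S` is a separating union-closed family of subsets of `[n] = {1,…,n}`
whose elements are labeled in order of increasing degree, then for each
`i ∈ [n-1]` there is a set `A i ∈ S` with `{i+1,…,n} ⊆ A i` and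
`A i ⊆ [i-1] ∪ {i+1,…,n}` (so `A i = {i+1,…,n} ∪ X_i` with `X_i ⊆ [i-1]`,
in particular `i ∉ A i`), and these `n-1` sets are pairwise distinct. -/
theorem separating_unionClosed_structure (n : ℕ) (S : Finset (Finset ℕ))
    (hsub : ∀ A ∈ S, A ⊆ Finset.Icc 1 n)
    (huc : ∀ A ∈ S, ∀ B ∈ S, A ∪ B ∈ S)
    (hsep : ∀ i ∈ Finset.Icc 1 n, ∀ j ∈ Finset.Icc 1 n, i ≠ j →
      ∃ A ∈ S, (i ∈ A ∧ j ∉ A) ∨ (j ∈ A ∧ i ∉ A))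
    (hmono : ∀ i ∈ Finset.Icc 1 n, ∀ j ∈ Finset.Icc 1 n, i ≤ j →
      (S.filter (fun A => i ∈ A)).card ≤ (S.filter (fun A => j ∈ A)).card) :
    ∃ A : ℕ → Finset ℕ,
      (∀ i ∈ Finset.Icc 1 (n - 1),
        A i ∈ S ∧ Finset.Icc (i + 1) n ⊆ A i ∧
          A i ⊆ Finset.Icc 1 (i - 1) ∪ Finset.Icc (i + 1) n) ∧
      (∀ i ∈ Finset.Icc 1 (n - 1), ∀ j ∈ Finset.Icc 1 (n - 1),
        i ≠ j → A i ≠ A j) := by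
  classical
  -- Key lemma: for i < j there is a set containing j but not i.
  have key : ∀ i ∈ Finset.Icc 1 n, ∀ j ∈ Finset.Icc 1 n, i < j →
      ∃ A ∈ S, j ∈ A ∧ i ∉ A := by
    intro i hi j hj hij
    by_contra h
    push_neg at h
    have hsubf : S.filter (fun A => j ∈ A) ⊆ S.filter (fun A => i ∈ A) := by
      intro A hA
      simp only [Finset.mem_filter] at hA ⊢
      exact ⟨hA.1, h A hA.1 hA.2⟩
    have heq : S.filter (fun A => j ∈ A) = S.filter (fun A => i ∈ A) :=
      Finset.eq_of_subset_of_card_le hsubf (hmono i hi j hj hij.le)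
    obtain ⟨A, hA, hAc⟩ := hsep i hi j hj hij.ne
    rcases hAc with ⟨hiA, hjA⟩ | ⟨hjA, hiA⟩
    · have : A ∈ S.filter (fun B => j ∈ B) := by
        rw [heq]; exact Finset.mem_filter.mpr ⟨hA, hiA⟩
      exact hjA (Finset.mem_filter.mp this).2
    · exact hiA (h A hA hjA)
  -- For each i ∈ [1, n-1] there is B ∈ S with Icc (i+1) n ⊆ B and i ∉ B.
  have exB : ∀ i ∈ Finset.Icc 1 (n - 1), ∃ B ∈ S, Finset.Icc (i + 1) n ⊆ B ∧ i ∉ B := by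
    intro i hi
    simp only [Finset.mem_Icc] at hi
    obtain ⟨hi1, hin⟩ := hi
    have hiIcc : i ∈ Finset.Icc 1 n := Finset.mem_Icc.mpr ⟨hi1, hin.trans (Nat.sub_le n 1)⟩
    have main : ∀ T : Finset ℕ, T.Nonempty → T ⊆ Finset.Icc (i + 1) n →
        ∃ B ∈ S, T ⊆ B ∧ i ∉ B := by
      intro T hTne hTsub
      induction T using Finset.induction_on with
      | empty => exact absurd hTne (by simp)
      | @insert a T ha ih =>
        have haI : a ∈ Finset.Icc (i + 1) n := hTsub (Finset.mem_insert_self a T)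
        have hia : i < a := by
          have := (Finset.mem_Icc.mp haI).1; omega
        have haIn : a ∈ Finset.Icc 1 n := by
          have := Finset.mem_Icc.mp haI
          exact Finset.mem_Icc.mpr ⟨by omega, this.2⟩
        obtain ⟨Ba, hBaS, haBa, hiBa⟩ := key i hiIcc a haIn hia
        rcases T.eq_empty_or_nonempty with rfl | hTne'
        · exact ⟨Ba, hBaS, by simp [haBa], hiBa⟩
        · obtain ⟨B, hBS, hTB, hiB⟩ := ih hTne'
            (fun x hx => hTsub (Finset.mem_insert_of_mem hx))
          refine ⟨Ba ∪ B, huc Ba hBaS B hBS, ?_, ?_⟩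
          · intro x hx
            rcases Finset.mem_insert.mp hx with rfl | hx
            · exact Finset.mem_union_left _ haBa
            · exact Finset.mem_union_right _ (hTB hx)
          · simp [hiBa, hiB]
    have hne : (Finset.Icc (i + 1) n).Nonempty := by
      refine ⟨i + 1, Finset.mem_Icc.mpr ⟨le_refl _, ?_⟩⟩; omega
    exact main _ hne (Finset.Subset.refl _)
  choose! A hAS hAsup hAnotmem using exB
  refine ⟨A, ?_, ?_⟩
  · intro i hi
    refine ⟨hAS i hi, hAsup i hi, ?_⟩
    intro x hx
    have hx1 := hsub _ (hAS i hi) hx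
    simp only [Finset.mem_Icc] at hx1
    have hxi : x ≠ i := fun h => hAnotmem i hi (h ▸ hx)
    simp only [Finset.mem_union, Finset.mem_Icc]
    omega
  · -- distinctness
    have dist : ∀ i ∈ Finset.Icc 1 (n - 1), ∀ j ∈ Finset.Icc 1 (n - 1), i < j → A i ≠ A j := by
      intro i hi j hj hij hAeq
      have hji := Finset.mem_Icc.mp hj
      have hjAi : j ∈ A i := hAsup i hi (Finset.mem_Icc.mpr ⟨by omega, by omega⟩)
      exact hAnotmem j hj (hAeq ▸ hjAi)
    intro i hi j hj hij
    rcases lt_or_gt_of_ne hij with h | h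
    · exact dist i hi j hj h
    · exact fun e => dist j hj i hi h e.symm
end

section
/- Let S be a separating union-closed family of subsets of [n] = {1,...,n} whose elements are labeled in order of increasing degree, i.e., d_S(i) ≤ d_S(j) whenever i ≤ j. Then d_S(i) ≥ i − 1 for every i ∈ [n]. -/
/-- If `S` is a separating union-closed family of subsets of `[n] = {1,…,n}`
whose elements are labeled in order of increasing degree, then
`d_S(i) ≥ i - 1` for every `i ∈ [n]`. -/
theorem separating_unionClosed_degree_lower_bound (n : ℕ) (S : Finset (Finset ℕ))
    (hsub : ∀ A ∈ S, A ⊆ Finset.Icc 1 n)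
    (huc : ∀ A ∈ S, ∀ B ∈ S, A ∪ B ∈ S)
    (hsep : ∀ i ∈ Finset.Icc 1 n, ∀ j ∈ Finset.Icc 1 n, i ≠ j →
      ∃ A ∈ S, (i ∈ A ∧ j ∉ A) ∨ (j ∈ A ∧ i ∉ A))
    (hmono : ∀ i ∈ Finset.Icc 1 n, ∀ j ∈ Finset.Icc 1 n, i ≤ j →
      (S.filter (fun A => i ∈ A)).card ≤ (S.filter (fun A => j ∈ A)).card) :
    ∀ i ∈ Finset.Icc 1 n, i - 1 ≤ (S.filter (fun A => i ∈ A)).card := by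
  intro i hi
  have hi' := Finset.mem_Icc.mp hi
  -- For each j < i, there is a witness in S containing i but not j.
  have hwit : ∀ j ∈ Finset.Icc 1 (i - 1),
      (S.filter (fun A => i ∈ A ∧ j ∉ A)).Nonempty := by
    intro j hj
    have hj' := Finset.mem_Icc.mp hj
    have hjn : j ∈ Finset.Icc 1 n := Finset.mem_Icc.mpr ⟨hj'.1, by omega⟩
    have hji : j ≠ i := by omega
    by_contra hne
    rw [Finset.not_nonempty_iff_eq_empty, Finset.filter_eq_empty_iff] at hne
    push_neg at hne
    obtain ⟨C, hC, hcase⟩ := hsep j hjn i hi hji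
    rcases hcase with ⟨hjC, hiC⟩ | ⟨hiC, hjC⟩
    · have hss : S.filter (fun A => i ∈ A) ⊂ S.filter (fun A => j ∈ A) := by
        constructor
        · intro A hA
          rw [Finset.mem_filter] at hA ⊢
          exact ⟨hA.1, hne hA.1 hA.2⟩
        · intro hsub'
          have hC1 : C ∈ S.filter (fun A => j ∈ A) := Finset.mem_filter.mpr ⟨hC, hjC⟩
          have hC2 : C ∉ S.filter (fun A => i ∈ A) := by
            simp only [Finset.mem_filter]
            tauto
          exact hC2 (hsub' hC1)
      have h1 := Finset.card_lt_card hss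
      have h2 := hmono j hjn i hi (by omega)
      omega
    · exact hjC (hne hC hiC)
  -- The maximal member of S containing i but avoiding j.
  set X : ℕ → Finset ℕ := fun j => (S.filter (fun A => i ∈ A ∧ j ∉ A)).sup id with hX
  have hXmem : ∀ j ∈ Finset.Icc 1 (i - 1), X j ∈ S ∧ i ∈ X j ∧ j ∉ X j := by
    intro j hj
    obtain ⟨A₀, hA₀⟩ := hwit j hj
    have hA₀' := Finset.mem_filter.mp hA₀
    have hsup : X j = (S.filter (fun A => i ∈ A ∧ j ∉ A)).sup' ⟨A₀, hA₀⟩ id :=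
      (Finset.sup'_eq_sup _ _).symm
    constructor
    · rw [hsup]
      exact Finset.sup'_mem (↑S : Set (Finset ℕ)) (fun x hx y hy => huc x hx y hy)
        _ ⟨A₀, hA₀⟩ id (fun A hA => (Finset.mem_filter.mp hA).1)
    constructor
    · exact Finset.le_sup (f := id) hA₀ hA₀'.2.1
    · intro hjX
      rw [hsup] at hjX
      -- j belongs to the sup', so j belongs to some member, contradiction
      have : X j ⊆ (Finset.Icc 1 n).erase j := by
        rw [hsup, ← Finset.le_iff_subset]
        apply Finset.sup'_le
        intro A hA
        have hA' := Finset.mem_filter.mp hA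
        rw [Finset.le_iff_subset]
        intro x hx
        exact Finset.mem_erase.mpr ⟨fun h => hA'.2.2 (h ▸ hx), hsub A hA'.1 hx⟩
      rw [← hsup] at hjX
      exact (Finset.mem_erase.mp (this hjX)).1 rfl
  have hXmax : ∀ j, ∀ A ∈ S, i ∈ A → j ∉ A → A ⊆ X j := by
    intro j A hA hiA hjA
    exact Finset.le_sup (f := id) (Finset.mem_filter.mpr ⟨hA, hiA, hjA⟩)
  -- Injectivity of X on [1, i-1]
  have hinj : Set.InjOn X (Finset.Icc 1 (i - 1)) := by
    intro j hj k hk hjk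
    simp only [Finset.coe_Icc, Set.mem_Icc] at hj hk
    by_contra hne
    have hjI : j ∈ Finset.Icc 1 (i - 1) := Finset.mem_Icc.mpr hj
    have hkI : k ∈ Finset.Icc 1 (i - 1) := Finset.mem_Icc.mpr hk
    obtain ⟨hXjS, hiXj, hjXj⟩ := hXmem j hjI
    obtain ⟨hXkS, hiXk, hkXk⟩ := hXmem k hkI
    have hjn : j ∈ Finset.Icc 1 n := Finset.mem_Icc.mpr ⟨hj.1, by omega⟩
    have hkn : k ∈ Finset.Icc 1 n := Finset.mem_Icc.mpr ⟨hk.1, by omega⟩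
    obtain ⟨C, hC, hcase⟩ := hsep j hjn k hkn hne
    rcases hcase with ⟨hjC, hkC⟩ | ⟨hkC, hjC⟩
    · -- j ∈ C, k ∉ C : C ∪ X k contains i, avoids k, so ⊆ X k, so j ∈ X k = X j
      have hU : C ∪ X k ∈ S := huc C hC _ hXkS
      have hsub' : C ∪ X k ⊆ X k := hXmax k _ hU (Finset.mem_union_right _ hiXk)
        (by simp [hkC, hkXk])
      have : j ∈ X k := hsub' (Finset.mem_union_left _ hjC)
      rw [← hjk] at this
      exact hjXj this
    · -- k ∈ C, j ∉ C : C ∪ X j avoids j, contains i, so ⊆ X j, so k ∈ X j = X k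
      have hU : C ∪ X j ∈ S := huc C hC _ hXjS
      have hsub' : C ∪ X j ⊆ X j := hXmax j _ hU (Finset.mem_union_right _ hiXj)
        (by simp [hjC, hjXj])
      have : k ∈ X j := hsub' (Finset.mem_union_left _ hkC)
      rw [hjk] at this
      exact hkXk this
  have hmaps : ∀ j ∈ Finset.Icc 1 (i - 1), X j ∈ S.filter (fun A => i ∈ A) := by
    intro j hj
    obtain ⟨h1, h2, _⟩ := hXmem j hj
    exact Finset.mem_filter.mpr ⟨h1, h2⟩
  calc i - 1 = (Finset.Icc 1 (i - 1)).card := by rw [Nat.card_Icc]; omega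
    _ ≤ (S.filter (fun A => i ∈ A)).card := Finset.card_le_card_of_injOn X hmaps hinj
end

section
/- Let S be a separating union-closed family of subsets of an n-element set Ω. Then the weight of S satisfies w(S) = ∑_{A ∈ S} |A| ≥ n(n−1)/2. -/
/-- If `S` is a separating union-closed family of subsets of an `n`-element
set `Ω`, then `w(S) = ∑_{A ∈ S} |A| ≥ n(n-1)/2`. -/
theorem separating_unionClosed_weight_lower_bound {α : Type*} [DecidableEq α]
    (Ω : Finset α) (n : ℕ) (hn : Ω.card = n) (S : Finset (Finset α))
    (hsub : ∀ A ∈ S, A ⊆ Ω)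
    (huc : ∀ A ∈ S, ∀ B ∈ S, A ∪ B ∈ S)
    (hsep : ∀ i ∈ Ω, ∀ j ∈ Ω, i ≠ j →
      ∃ A ∈ S, (i ∈ A ∧ j ∉ A) ∨ (j ∈ A ∧ i ∉ A)) :
    n * (n - 1) / 2 ≤ ∑ A ∈ S, A.card := by
  classical
  -- M i = union of all sets in S avoiding i
  set M : α → Finset α := fun i => (S.filter (fun A => i ∉ A)).sup id with hM
  have hmemM : ∀ i j : α, j ∈ M i ↔ ∃ A ∈ S, i ∉ A ∧ j ∈ A := by
    intro i j
    simp only [hM, Finset.mem_sup, Finset.mem_filter, id]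
    constructor
    · rintro ⟨A, ⟨hAS, hiA⟩, hjA⟩; exact ⟨A, hAS, hiA, hjA⟩
    · rintro ⟨A, hAS, hiA, hjA⟩; exact ⟨A, ⟨hAS, hiA⟩, hjA⟩
  have hiM : ∀ i, i ∉ M i := by
    intro i h
    obtain ⟨A, _, hiA, hiA'⟩ := (hmemM i i).1 h
    exact hiA hiA'
  have hsubM : ∀ i, ∀ A ∈ S, i ∉ A → A ⊆ M i := by
    intro i A hAS hiA
    exact Finset.le_sup (f := id) (Finset.mem_filter.2 ⟨hAS, hiA⟩)
  have hMS : ∀ i, (M i).Nonempty → M i ∈ S := by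
    intro i hne
    obtain ⟨j, hj⟩ := hne
    obtain ⟨A, hAS, hiA, _⟩ := (hmemM i j).1 hj
    have hfne : (S.filter (fun A => i ∉ A)).Nonempty :=
      ⟨A, Finset.mem_filter.2 ⟨hAS, hiA⟩⟩
    have : (S.filter (fun A => i ∉ A)).sup' hfne id ∈ (S : Set (Finset α)) := by
      apply Finset.sup'_mem
      · intro x hx y hy; exact huc x hx y hy
      · intro B hB; exact (Finset.mem_filter.1 hB).1
    rwa [Finset.sup'_eq_sup] at this
  have hinj : ∀ i ∈ Ω, ∀ j ∈ Ω, i ≠ j → M i ≠ M j := by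
    intro i hi j hj hne heq
    obtain ⟨A, hAS, h⟩ := hsep i hi j hj hne
    rcases h with ⟨hiA, hjA⟩ | ⟨hjA, hiA⟩
    · have : A ⊆ M j := hsubM j A hAS hjA
      exact hiM i (heq ▸ this hiA)
    · have : A ⊆ M i := hsubM i A hAS hiA
      exact hiM j (heq ▸ this hjA)
  have hpair : ∀ i ∈ Ω, ∀ j ∈ Ω, i ≠ j → j ∈ M i ∨ i ∈ M j := by
    intro i hi j hj hne
    obtain ⟨A, hAS, h⟩ := hsep i hi j hj hne
    rcases h with ⟨hiA, hjA⟩ | ⟨hjA, hiA⟩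
    · exact Or.inr ((hmemM j i).2 ⟨A, hAS, hjA, hiA⟩)
    · exact Or.inl ((hmemM i j).2 ⟨A, hAS, hiA, hjA⟩)
  have hMΩ : ∀ i, M i ⊆ Ω := by
    intro i
    show M i ≤ Ω
    apply Finset.sup_le
    intro A hA
    exact hsub A (Finset.mem_filter.1 hA).1
  -- card of M i as an indicator sum over Ω
  have hcard : ∀ i, (M i).card = ∑ j ∈ Ω, if j ∈ M i then 1 else 0 := by
    intro i
    have hfe : Ω.filter (fun j => j ∈ M i) = M i := by
      ext j
      simp only [Finset.mem_filter]
      exact ⟨fun h => h.2, fun h => ⟨hMΩ i h, h⟩⟩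
    calc (M i).card = ∑ _j ∈ Ω.filter (fun j => j ∈ M i), 1 := by
          rw [hfe, Finset.card_eq_sum_ones]
      _ = ∑ j ∈ Ω, if j ∈ M i then 1 else 0 := Finset.sum_filter _ _
  -- lower bound: double counting pairs
  have hB1 : n * (n - 1) ≤ 2 * ∑ i ∈ Ω, (M i).card := by
    have step1 : n * (n - 1) = ∑ i ∈ Ω, ∑ j ∈ Ω, if i ≠ j then 1 else 0 := by
      have : ∀ i ∈ Ω, (∑ j ∈ Ω, if i ≠ j then 1 else 0) = n - 1 := by
        intro i hi
        have hfe : Ω.filter (fun j => i ≠ j) = Ω.erase i := by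
          ext j
          simp [Finset.mem_erase, Finset.mem_filter, and_comm, ne_comm]
        calc (∑ j ∈ Ω, if i ≠ j then 1 else 0)
            = ∑ _j ∈ Ω.filter (fun j => i ≠ j), 1 := (Finset.sum_filter _ _).symm
          _ = n - 1 := by rw [hfe, Finset.sum_const, smul_eq_mul, mul_one,
              Finset.card_erase_of_mem hi, hn]
      rw [Finset.sum_congr rfl this, Finset.sum_const, smul_eq_mul, hn]
    have step2 : (∑ i ∈ Ω, ∑ j ∈ Ω, if i ≠ j then 1 else 0)
        ≤ ∑ i ∈ Ω, ∑ j ∈ Ω, ((if j ∈ M i then 1 else 0) + (if i ∈ M j then 1 else 0)) := by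
      apply Finset.sum_le_sum
      intro i hi
      apply Finset.sum_le_sum
      intro j hj
      by_cases hne : i ≠ j
      · simp only [if_pos hne]
        rcases hpair i hi j hj hne with h | h
        · simp [h]
        · simp [h]
      · simp [hne]
    have step3 : (∑ i ∈ Ω, ∑ j ∈ Ω, ((if j ∈ M i then 1 else 0) + (if i ∈ M j then 1 else 0)))
        = 2 * ∑ i ∈ Ω, (M i).card := by
      rw [two_mul]
      rw [Finset.sum_congr rfl (fun i _ => Finset.sum_add_distrib)]
      rw [Finset.sum_add_distrib]
      congr 1
      · exact (Finset.sum_congr rfl (fun i _ => (hcard i).symm))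
      · rw [Finset.sum_comm]
        exact (Finset.sum_congr rfl (fun i _ => (hcard i).symm))
    calc n * (n - 1) = _ := step1
      _ ≤ _ := step2
      _ = _ := step3
  -- upper bound via injectivity
  have hB2 : ∑ i ∈ Ω, (M i).card ≤ ∑ A ∈ S, A.card := by
    set T := Ω.filter (fun i => (M i).Nonempty) with hT
    have h1 : ∑ i ∈ Ω, (M i).card = ∑ i ∈ T, (M i).card := by
      symm
      apply Finset.sum_filter_of_ne
      intro i _ h
      rw [Finset.nonempty_iff_ne_empty]
      intro hemp
      rw [hemp] at h
      simp at h
    have h2 : ∑ i ∈ T, (M i).card = ∑ A ∈ T.image M, A.card := by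
      rw [Finset.sum_image]
      intro i hi j hj heq
      by_contra hne
      exact hinj i (Finset.mem_filter.1 hi).1 j (Finset.mem_filter.1 hj).1 hne heq
    have h3 : T.image M ⊆ S := by
      intro A hA
      obtain ⟨i, hi, rfl⟩ := Finset.mem_image.1 hA
      exact hMS i (Finset.mem_filter.1 hi).2
    rw [h1, h2]
    exact Finset.sum_le_sum_of_subset h3
  have : n * (n - 1) ≤ 2 * ∑ A ∈ S, A.card := le_trans hB1 (by omega)
  omega
end

section
/- Let S be a separating union-closed family of subsets of [n] = {1,...,n} (n ≥ 2) whose elements are labeled in order of increasing degree, i.e., d_S(i) ≤ d_S(j) whenever i ≤ j. Then w(S) = n(n−1)/2 if and only if S = T_n or S = T_n ∪ {∅}, where T_n = { {k, k+1, ..., n} : 2 ≤ k ≤ n } is the staircase of height n. -/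
open Finset

private lemma ucSupMem (S : Finset (Finset ℕ))
    (huc : ∀ A ∈ S, ∀ B ∈ S, A ∪ B ∈ S) :
    ∀ T : Finset (Finset ℕ), T ⊆ S → T.Nonempty → T.sup id ∈ S := by
  intro T
  induction T using Finset.induction_on with
  | empty => intro _ h; simp at h
  | @insert A T hAT ih =>
    intro hsubT _
    have hAS : A ∈ S := hsubT (mem_insert_self _ _)
    rcases T.eq_empty_or_nonempty with rfl | hne
    · simpa using hAS
    · have hT : T.sup id ∈ S := ih (fun x hx => hsubT (mem_insert_of_mem hx)) hne
      rw [sup_insert]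
      exact huc A hAS _ hT

private lemma gauss1 (n : ℕ) : ∑ j ∈ Icc 1 n, (j - 1) = n * (n - 1) / 2 := by
  rw [← Finset.sum_range_id n]
  apply Finset.sum_nbij' (fun j => j - 1) (fun i => i + 1) <;>
    intros a ha <;> simp only [mem_Icc, mem_range] at * <;> omega

private lemma gauss2 (n : ℕ) (hn : 1 ≤ n) :
    ∑ k ∈ Icc 2 n, (n + 1 - k) = n * (n - 1) / 2 := by
  have h1 : ∑ k ∈ Icc 2 n, (n + 1 - k) = ∑ k ∈ Icc 2 n, (k - 1) := by
    apply Finset.sum_nbij' (fun k => n + 2 - k) (fun k => n + 2 - k) <;>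
      intros a ha <;> simp only [mem_Icc] at * <;> omega
  have hins : Icc 1 n = insert 1 (Icc 2 n) := by
    ext x; simp only [mem_Icc, mem_insert]; omega
  have h2 : ∑ j ∈ Icc 1 n, (j - 1) = ∑ k ∈ Icc 2 n, (k - 1) := by
    rw [hins, Finset.sum_insert (by simp)]
    omega
  rw [h1, ← h2, gauss1]

/-- Equality case: a separating union-closed family `S` on `[n]` (with `n ≥ 2`,
elements labeled in order of increasing degree) has weight exactly `n(n-1)/2`
iff `S` is the staircase `T_n = { {k,…,n} : 2 ≤ k ≤ n }` or `T_n ∪ {∅}`. -/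
theorem separating_unionClosed_weight_eq_iff_staircase (n : ℕ) (hn : 2 ≤ n)
    (S : Finset (Finset ℕ))
    (hsub : ∀ A ∈ S, A ⊆ Finset.Icc 1 n)
    (huc : ∀ A ∈ S, ∀ B ∈ S, A ∪ B ∈ S)
    (hsep : ∀ i ∈ Finset.Icc 1 n, ∀ j ∈ Finset.Icc 1 n, i ≠ j →
      ∃ A ∈ S, (i ∈ A ∧ j ∉ A) ∨ (j ∈ A ∧ i ∉ A))
    (hmono : ∀ i ∈ Finset.Icc 1 n, ∀ j ∈ Finset.Icc 1 n, i ≤ j →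
      (S.filter (fun A => i ∈ A)).card ≤ (S.filter (fun A => j ∈ A)).card) :
    (∑ A ∈ S, A.card = n * (n - 1) / 2) ↔
      (S = (Finset.Icc 2 n).image (fun k => Finset.Icc k n) ∨
        S = insert ∅ ((Finset.Icc 2 n).image (fun k => Finset.Icc k n))) := by
  constructor
  · intro hw
    -- Step A: if i ≠ j and d i ≤ d j, there is a set containing j but not i
    have stepA : ∀ i ∈ Finset.Icc 1 n, ∀ j ∈ Finset.Icc 1 n, i ≠ j →
        (S.filter (fun A => i ∈ A)).card ≤ (S.filter (fun A => j ∈ A)).card →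
        ∃ A ∈ S, j ∈ A ∧ i ∉ A := by
      intro i hi j hj hij hdij
      by_contra hcon
      push_neg at hcon
      have hsubf : S.filter (fun A => j ∈ A) ⊆ S.filter (fun A => i ∈ A) := by
        intro A hA
        rw [mem_filter] at hA ⊢
        exact ⟨hA.1, hcon A hA.1 hA.2⟩
      have heq : S.filter (fun A => j ∈ A) = S.filter (fun A => i ∈ A) :=
        Finset.eq_of_subset_of_card_le hsubf hdij
      obtain ⟨A, hAS, hor⟩ := hsep i hi j hj hij
      rcases hor with ⟨hiA, hjA⟩ | ⟨hjA, hiA⟩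
      · have : A ∈ S.filter (fun A => j ∈ A) := by
          rw [heq, mem_filter]; exact ⟨hAS, hiA⟩
        exact hjA (mem_filter.mp this).2
      · exact hiA (hcon A hAS hjA)
    have hstep' : ∀ i ∈ Finset.Icc 1 n, ∀ j ∈ Finset.Icc 1 n, i < j →
        ∃ A ∈ S, j ∈ A ∧ i ∉ A :=
      fun i hi j hj hij => stepA i hi j hj hij.ne (hmono i hi j hj hij.le)
    set B : ℕ → Finset ℕ := fun i => (S.filter (fun A => i ∉ A)).sup id with hBdef
    have hBj : ∀ i ∈ Finset.Icc 1 n, ∀ j ∈ Finset.Icc 1 n, i < j → j ∈ B i := by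
      intro i hi j hj hij
      obtain ⟨A, hAS, hjA, hiA⟩ := hstep' i hi j hj hij
      exact mem_sup.mpr ⟨A, mem_filter.mpr ⟨hAS, hiA⟩, hjA⟩
    have hBmem : ∀ i ∈ Finset.Icc 1 n, i < n → B i ∈ S := by
      intro i hi hin
      obtain ⟨A, hAS, hnA, hiA⟩ := hstep' i hi n (mem_Icc.mpr ⟨by omega, le_refl n⟩) hin
      exact ucSupMem S huc _ (filter_subset _ _) ⟨A, mem_filter.mpr ⟨hAS, hiA⟩⟩
    have hBnot : ∀ i, i ∉ B i := by
      intro i hi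
      obtain ⟨A, hA, hiA⟩ := mem_sup.mp hi
      exact (mem_filter.mp hA).2 hiA
    have hBne : ∀ i ∈ Finset.Icc 1 n, ∀ k ∈ Finset.Icc 1 n, i ≠ k → B i ≠ B k := by
      intro i hi k hk hik heq
      obtain ⟨A, hAS, hor⟩ := hsep i hi k hk hik
      rcases hor with ⟨hiA, hkA⟩ | ⟨hkA, hiA⟩
      · have : i ∈ B k := mem_sup.mpr ⟨A, mem_filter.mpr ⟨hAS, hkA⟩, hiA⟩
        rw [← heq] at this
        exact hBnot i this
      · have : k ∈ B i := mem_sup.mpr ⟨A, mem_filter.mpr ⟨hAS, hiA⟩, hkA⟩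
        rw [heq] at this
        exact hBnot k this
    -- B maps Icc 1 (j-1) into the sets containing j
    have hmaps : ∀ j ∈ Finset.Icc 1 n, ∀ i ∈ Finset.Icc 1 (j - 1),
        B i ∈ S.filter (fun A => j ∈ A) := by
      intro j hj i hi
      have hj' := mem_Icc.mp hj
      have hi' := mem_Icc.mp hi
      have hiIcc : i ∈ Finset.Icc 1 n := mem_Icc.mpr ⟨hi'.1, by omega⟩
      exact mem_filter.mpr ⟨hBmem i hiIcc (by omega), hBj i hiIcc j hj (by omega)⟩
    have hinjB : ∀ j, j ≤ n → Set.InjOn B ↑(Finset.Icc 1 (j - 1)) := by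
      intro j hjn a ha b hb hab
      simp only [Finset.coe_Icc, Set.mem_Icc] at ha hb
      by_contra hne
      exact hBne a (mem_Icc.mpr ⟨ha.1, by omega⟩) b (mem_Icc.mpr ⟨hb.1, by omega⟩) hne hab
    -- degree lower bound
    have hdlb : ∀ j ∈ Finset.Icc 1 n, j - 1 ≤ (S.filter (fun A => j ∈ A)).card := by
      intro j hj
      have hj' := mem_Icc.mp hj
      calc j - 1 = (Finset.Icc 1 (j - 1)).card := by rw [Nat.card_Icc]; omega
        _ ≤ _ := Finset.card_le_card_of_injOn B (hmaps j hj) (hinjB j hj'.2)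
    -- weight equals sum of degrees
    have hwsum : ∑ A ∈ S, A.card = ∑ j ∈ Finset.Icc 1 n, (S.filter (fun A => j ∈ A)).card := by
      have h1 : ∀ A ∈ S, A.card = ∑ j ∈ Finset.Icc 1 n, if j ∈ A then 1 else 0 := by
        intro A hA
        rw [← Finset.card_filter]
        congr 1
        ext x
        simp only [mem_filter, mem_Icc]
        constructor
        · intro h
          have hx := mem_Icc.mp (hsub A hA h)
          exact ⟨hx, h⟩
        · rintro ⟨-, h⟩; exact h
      calc ∑ A ∈ S, A.card = ∑ A ∈ S, ∑ j ∈ Finset.Icc 1 n, if j ∈ A then 1 else 0 :=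
            Finset.sum_congr rfl h1
        _ = ∑ j ∈ Finset.Icc 1 n, ∑ A ∈ S, if j ∈ A then 1 else 0 := Finset.sum_comm
        _ = _ := Finset.sum_congr rfl (fun j _ => (Finset.card_filter _ _).symm)
    -- equality forces all degrees
    have hdall : ∀ j ∈ Finset.Icc 1 n, (S.filter (fun A => j ∈ A)).card = j - 1 := by
      have hsum : ∑ j ∈ Finset.Icc 1 n, (j - 1)
          = ∑ j ∈ Finset.Icc 1 n, (S.filter (fun A => j ∈ A)).card := by
        rw [← hwsum, hw, gauss1]
      have := (Finset.sum_eq_sum_iff_of_le hdlb).mp hsum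
      intro j hj
      exact ((this j hj).symm)
    -- the filter is exactly the image of B
    have hFj : ∀ j ∈ Finset.Icc 1 n,
        S.filter (fun A => j ∈ A) = (Finset.Icc 1 (j - 1)).image B := by
      intro j hj
      have hj' := mem_Icc.mp hj
      refine (Finset.eq_of_subset_of_card_le ?_ ?_).symm
      · intro X hX
        obtain ⟨i, hi, rfl⟩ := mem_image.mp hX
        exact hmaps j hj i hi
      · rw [hdall j hj, Finset.card_image_of_injOn (hinjB j hj'.2), Nat.card_Icc]
        omega
    -- B i is the interval Icc (i+1) n
    have hBeq : ∀ i ∈ Finset.Icc 1 (n - 1), B i = Finset.Icc (i + 1) n := by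
      intro i hi
      have hi' := mem_Icc.mp hi
      have hiIcc : i ∈ Finset.Icc 1 n := mem_Icc.mpr ⟨hi'.1, by omega⟩
      ext j
      simp only [mem_Icc]
      constructor
      · intro hjB
        obtain ⟨A, hAf, hjA⟩ := mem_sup.mp hjB
        have hAS := (mem_filter.mp hAf).1
        have hjIcc : j ∈ Finset.Icc 1 n := hsub A hAS hjA
        have hj' := mem_Icc.mp hjIcc
        have hBif : B i ∈ S.filter (fun A => j ∈ A) :=
          mem_filter.mpr ⟨hBmem i hiIcc (by omega), hjB⟩
        rw [hFj j hjIcc] at hBif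
        obtain ⟨k, hk, hBk⟩ := mem_image.mp hBif
        have hk' := mem_Icc.mp hk
        have hik : i = k := by
          by_contra hne
          exact hBne i hiIcc k (mem_Icc.mpr ⟨hk'.1, by omega⟩) hne hBk.symm
        omega
      · intro hj
        exact hBj i hiIcc j (mem_Icc.mpr ⟨by omega, hj.2⟩) (by omega)
    -- T ⊆ S
    have hTS : (Finset.Icc 2 n).image (fun k => Finset.Icc k n) ⊆ S := by
      intro X hX
      obtain ⟨k, hk, rfl⟩ := mem_image.mp hX
      have hk' := mem_Icc.mp hk
      have hkm : k - 1 ∈ Finset.Icc 1 (n - 1) := mem_Icc.mpr ⟨by omega, by omega⟩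
      have hkeq : Finset.Icc k n = B (k - 1) := by
        rw [hBeq _ hkm]
        congr 1
        omega
      rw [hkeq]
      exact hBmem (k - 1) (mem_Icc.mpr ⟨by omega, by omega⟩) (by omega)
    -- S ⊆ T ∪ {∅}
    have hST : S ⊆ insert ∅ ((Finset.Icc 2 n).image (fun k => Finset.Icc k n)) := by
      intro A hAS
      rcases A.eq_empty_or_nonempty with rfl | ⟨j, hjA⟩
      · exact mem_insert_self _ _
      · have hjIcc : j ∈ Finset.Icc 1 n := hsub A hAS hjA
        have hj' := mem_Icc.mp hjIcc
        have hAf : A ∈ S.filter (fun A => j ∈ A) := mem_filter.mpr ⟨hAS, hjA⟩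
        rw [hFj j hjIcc] at hAf
        obtain ⟨i, hi, rfl⟩ := mem_image.mp hAf
        have hi' := mem_Icc.mp hi
        refine mem_insert_of_mem (mem_image.mpr ⟨i + 1, mem_Icc.mpr ⟨by omega, by omega⟩, ?_⟩)
        exact (hBeq i (mem_Icc.mpr ⟨hi'.1, by omega⟩)).symm
    by_cases h0 : ∅ ∈ S
    · right
      exact Finset.Subset.antisymm hST (Finset.insert_subset h0 hTS)
    · left
      refine Finset.Subset.antisymm ?_ hTS
      intro A hA
      rcases mem_insert.mp (hST hA) with rfl | h
      · exact absurd hA h0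
      · exact h
  · -- reverse direction: compute the weight of the staircase
    have hinj : ∀ a ∈ Finset.Icc 2 n, ∀ b ∈ Finset.Icc 2 n,
        Finset.Icc a n = Finset.Icc b n → a = b := by
      intro a ha b hb hab
      have ha' := mem_Icc.mp ha
      have hb' := mem_Icc.mp hb
      have h1 : a ∈ Finset.Icc b n := by rw [← hab]; exact mem_Icc.mpr ⟨le_refl a, ha'.2⟩
      have h2 : b ∈ Finset.Icc a n := by rw [hab]; exact mem_Icc.mpr ⟨le_refl b, hb'.2⟩
      have := mem_Icc.mp h1
      have := mem_Icc.mp h2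
      omega
    have hsumT : ∑ A ∈ (Finset.Icc 2 n).image (fun k => Finset.Icc k n), A.card
        = n * (n - 1) / 2 := by
      rw [Finset.sum_image hinj]
      rw [show (∑ k ∈ Finset.Icc 2 n, (Finset.Icc k n).card) = ∑ k ∈ Finset.Icc 2 n, (n + 1 - k)
        from Finset.sum_congr rfl (fun k _ => Nat.card_Icc k n)]
      exact gauss2 n (by omega)
    have hempty : ∅ ∉ (Finset.Icc 2 n).image (fun k => Finset.Icc k n) := by
      intro h
      obtain ⟨k, hk, hke⟩ := mem_image.mp h
      have hk' := mem_Icc.mp hk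
      have : k ∈ Finset.Icc k n := mem_Icc.mpr ⟨le_refl k, hk'.2⟩
      rw [hke] at this
      simp at this
    rintro (rfl | rfl)
    · exact hsumT
    · rw [Finset.sum_insert hempty, hsumT]
      simp
end

section
/- Let S be a separating union-closed family of subsets of a finite set Ω. Then |Ω| ≤ |S| + 1; equivalently, a union-closed family of size m can be at most (m+1)-separating. -/
/-- A separating union-closed family `S` of subsets of a finite set `Ω`
satisfies `|Ω| ≤ |S| + 1`: a union-closed family of size `m` can be at most
`(m+1)`-separating. -/
theorem separating_unionClosed_domain_card_le {α : Type*} [DecidableEq α]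
    (Ω : Finset α) (S : Finset (Finset α))
    (hsub : ∀ A ∈ S, A ⊆ Ω)
    (huc : ∀ A ∈ S, ∀ B ∈ S, A ∪ B ∈ S)
    (hsep : ∀ i ∈ Ω, ∀ j ∈ Ω, i ≠ j →
      ∃ A ∈ S, (i ∈ A ∧ j ∉ A) ∨ (j ∈ A ∧ i ∉ A)) :
    Ω.card ≤ S.card + 1 := by
  classical
  have hsupmem : ∀ T : Finset (Finset α), T.Nonempty → T ⊆ S → T.sup id ∈ S := by
    intro T hT
    induction hT using Finset.Nonempty.cons_induction with
    | singleton a => intro h; simpa using h (by simp)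
    | cons a s ha hs ih =>
        intro hsub'
        rw [Finset.sup_cons]
        exact huc a (hsub' (by simp)) _
          (ih (fun b hb => hsub' (Finset.mem_cons_of_mem hb)))
  set f : α → Finset α := fun x => (S.filter (fun A => x ∉ A)).sup id with hf
  have hnot : ∀ x, x ∉ f x := by
    intro x hx
    obtain ⟨A, hA, hxA⟩ := Finset.mem_sup.mp hx
    exact (Finset.mem_filter.mp hA).2 hxA
  have hmem : ∀ x ∈ Ω, f x ∈ insert ∅ S := by
    intro x _
    by_cases h : (S.filter (fun A => x ∉ A)).Nonempty
    · exact Finset.mem_insert_of_mem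
        (hsupmem _ h (Finset.filter_subset _ _))
    · rw [Finset.not_nonempty_iff_eq_empty] at h
      simp [hf, h]
  have hinj : Set.InjOn f Ω := by
    intro x hx y hy hxy
    by_contra hne
    obtain ⟨A, hA, h⟩ := hsep x hx y hy hne
    rcases h with ⟨hxA, hyA⟩ | ⟨hyA, hxA⟩
    · have : x ∈ f y := Finset.mem_sup.mpr ⟨A, Finset.mem_filter.mpr ⟨hA, hyA⟩, hxA⟩
      exact hnot x (hxy ▸ this)
    · have : y ∈ f x := Finset.mem_sup.mpr ⟨A, Finset.mem_filter.mpr ⟨hA, hxA⟩, hyA⟩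
      exact hnot y (hxy ▸ this)
  calc Ω.card ≤ (insert ∅ S).card := Finset.card_le_card_of_injOn f hmem hinj
    _ ≤ S.card + 1 := Finset.card_insert_le _ _
end

section
/- Let n ≥ 3. Every separating union-closed family of subsets of [n] = {1,...,n} with exactly n+1 members has weight at least n(n−1)/2 + 1, and this bound is attained: the family T_n ∪ {∅} ∪ {{n−1}}, where T_n = { {k,...,n} : 2 ≤ k ≤ n }, is a separating union-closed family on [n] of size n+1 with weight exactly n(n−1)/2 + 1. -/
open Finset

lemma sup_mem_uc {S P : Finset (Finset ℕ)}
    (hU : ∀ A ∈ S, ∀ B ∈ S, A ∪ B ∈ S) (hPS : P ⊆ S) (hP : P.Nonempty) :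
    P.sup id ∈ S := by
  have h := Finset.sup'_mem (↑S : Set (Finset ℕ))
    (fun x hx y hy => hU x hx y hy) P hP id (fun i hi => hPS hi)
  rwa [Finset.sup'_eq_sup] at h

lemma even_half (n : ℕ) : 2 * (n * (n-1) / 2) = n * (n-1) := by
  rcases Nat.eq_zero_or_pos n with h | h
  · simp [h]
  apply Nat.mul_div_cancel'
  have : Even ((n-1) * ((n-1)+1)) := Nat.even_mul_succ_self (n-1)
  have h1 : (n-1)+1 = n := by omega
  rw [h1, mul_comm] at this
  exact this.two_dvd

lemma gauss_aux : ∀ n : ℕ, 2 * (∑ k ∈ Icc 2 n, (n + 1 - k)) = n * (n-1) := by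
  intro n
  induction n with
  | zero => simp
  | succ m ih =>
    rcases Nat.lt_or_ge m 2 with hm | hm
    · interval_cases m <;> simp [Finset.Icc_self]
    · have h1 : ∑ k ∈ Icc 2 (m+1), (m + 1 + 1 - k) =
          (∑ k ∈ Icc 2 m, (m + 1 + 1 - k)) + (m + 1 + 1 - (m+1)) :=
        Finset.sum_Icc_succ_top (by omega) _
      have h2 : ∑ k ∈ Icc 2 m, (m + 1 + 1 - k) = (∑ k ∈ Icc 2 m, (m + 1 - k)) + (m - 1) := by
        have he : ∀ k ∈ Icc 2 m, m + 1 + 1 - k = (m + 1 - k) + 1 := by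
          intro k hk; rw [mem_Icc] at hk; omega
        rw [Finset.sum_congr rfl he, Finset.sum_add_distrib, Finset.sum_const,
          Nat.card_Icc, smul_eq_mul, mul_one]
        omega
      have hc : (m+1) * (m+1-1) = m * (m-1) + 2*m := by
        obtain ⟨p, rfl⟩ : ∃ p, m = p + 1 := ⟨m-1, by omega⟩
        simp only [Nat.add_sub_cancel]
        ring
      omega

-- weight as column sums
lemma weight_eq (n : ℕ) (S : Finset (Finset ℕ)) (hsub : ∀ A ∈ S, A ⊆ Icc 1 n) :
    ∑ A ∈ S, A.card = ∑ i ∈ Icc 1 n, (S.filter (fun A => i ∈ A)).card := by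
  classical
  have h1 : ∀ A ∈ S, A.card = ∑ i ∈ Icc 1 n, (if i ∈ A then 1 else 0) := by
    intro A hA
    rw [← Finset.card_filter]
    congr 1
    rw [Finset.filter_mem_eq_inter, Finset.inter_eq_right.mpr (hsub A hA)]
  rw [Finset.sum_congr rfl h1, Finset.sum_comm]
  exact Finset.sum_congr rfl (fun i _ => (Finset.card_filter _ _).symm)

-- sum of down-set sizes = |S| + #strict pairs
lemma rsum_eq (S : Finset (Finset ℕ)) :
    ∑ B ∈ S, (S.filter (fun A => A ⊆ B)).card
      = S.card + ((S ×ˢ S).filter (fun p => p.1 ⊂ p.2)).card := by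
  classical
  have h1 : ∀ B ∈ S, (S.filter (fun A => A ⊆ B)).card
      = (S.filter (fun A => A ⊂ B)).card + 1 := by
    intro B hB
    have : S.filter (fun A => A ⊆ B) = insert B (S.filter (fun A => A ⊂ B)) := by
      ext A
      simp only [mem_filter, mem_insert]
      constructor
      · rintro ⟨hA, hAB⟩
        rcases eq_or_ne A B with rfl | hne'
        · exact Or.inl rfl
        · exact Or.inr ⟨hA, Finset.ssubset_iff_subset_ne.mpr ⟨hAB, hne'⟩⟩
      · rintro (rfl | ⟨hA, hAB⟩)
        · exact ⟨hB, Finset.Subset.refl _⟩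
        · exact ⟨hA, hAB.subset⟩
    rw [this, Finset.card_insert_of_notMem (by
      simp only [mem_filter, not_and]
      exact fun _ => ssubset_irrefl B)]
  rw [Finset.sum_congr rfl h1, Finset.sum_add_distrib, Finset.sum_const, smul_eq_mul, mul_one,
    add_comm]
  congr 1
  have h2 : ((S ×ˢ S).filter (fun p => p.1 ⊂ p.2)).card
      = ∑ B ∈ S, (((S ×ˢ S).filter (fun p => p.1 ⊂ p.2)).filter (fun p => p.2 = B)).card := by
    apply Finset.card_eq_sum_card_fiberwise
    intro p hp
    simp only [mem_coe, mem_filter, Finset.mem_product] at hp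
    exact hp.1.2
  rw [h2]
  apply Finset.sum_congr rfl
  intro B hB
  symm
  apply Finset.card_bij (fun p _ => p.1)
  · intro p hp
    simp only [mem_filter, Finset.mem_product] at hp ⊢
    exact ⟨hp.1.1.1, hp.2 ▸ hp.1.2⟩
  · intro p hp q hq h
    simp only [mem_filter] at hp hq
    exact Prod.ext h (hp.2.trans hq.2.symm)
  · intro A hA
    simp only [mem_filter] at hA
    exact ⟨(A, B), by simp [mem_filter, Finset.mem_product, hA.1, hA.2, hB], rfl⟩

-- bound on strict pairs given an incomparable pair
lemma t_bound (S : Finset (Finset ℕ)) {A₀ B₀ : Finset ℕ} (hA₀ : A₀ ∈ S) (hB₀ : B₀ ∈ S)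
    (h1 : ¬ A₀ ⊆ B₀) (h2 : ¬ B₀ ⊆ A₀) :
    2 * ((S ×ˢ S).filter (fun p => p.1 ⊂ p.2)).card + 2 ≤ S.offDiag.card := by
  classical
  set t := (S ×ˢ S).filter (fun p => p.1 ⊂ p.2) with ht
  set t' := t.image Prod.swap with ht'
  have hne : A₀ ≠ B₀ := fun h => h1 (h ▸ Finset.Subset.refl _)
  have hmem_t : ∀ p : Finset ℕ × Finset ℕ, p ∈ t ↔ p.1 ∈ S ∧ p.2 ∈ S ∧ p.1 ⊂ p.2 := by
    intro p; simp only [ht, mem_filter, Finset.mem_product]; tauto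
  have hmem_t' : ∀ p : Finset ℕ × Finset ℕ, p ∈ t' ↔ p.1 ∈ S ∧ p.2 ∈ S ∧ p.2 ⊂ p.1 := by
    intro p
    simp only [ht', Finset.mem_image]
    constructor
    · rintro ⟨q, hq, rfl⟩
      rw [hmem_t] at hq
      exact ⟨hq.2.1, hq.1, hq.2.2⟩
    · rintro ⟨hp1, hp2, hp⟩
      exact ⟨p.swap, (hmem_t p.swap).mpr ⟨hp2, hp1, hp⟩, Prod.swap_swap p⟩
  have hdisj : Disjoint t t' := by
    rw [Finset.disjoint_left]
    intro p hp hp'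
    rw [hmem_t] at hp; rw [hmem_t'] at hp'
    exact ssubset_irrefl _ (hp.2.2.trans hp'.2.2)
  have hab : (A₀, B₀) ∉ t ∪ t' := by
    rw [Finset.mem_union, hmem_t, hmem_t']
    push_neg
    refine ⟨fun _ _ h => h1 h.subset, fun _ _ h => h2 h.subset⟩
  have hba : (B₀, A₀) ∉ t ∪ t' := by
    rw [Finset.mem_union, hmem_t, hmem_t']
    push_neg
    refine ⟨fun _ _ h => h2 h.subset, fun _ _ h => h1 h.subset⟩
  have hne2 : ((A₀, B₀) : Finset ℕ × Finset ℕ) ≠ (B₀, A₀) := by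
    simp [Prod.ext_iff, hne]
  set u := insert ((A₀, B₀) : Finset ℕ × Finset ℕ) (insert (B₀, A₀) (t ∪ t')) with hu
  have husub : u ⊆ S.offDiag := by
    intro p hp
    rw [hu, Finset.mem_insert, Finset.mem_insert, Finset.mem_union] at hp
    rw [Finset.mem_offDiag]
    rcases hp with rfl | rfl | hp | hp
    · exact ⟨hA₀, hB₀, hne⟩
    · exact ⟨hB₀, hA₀, hne.symm⟩
    · rw [hmem_t] at hp; exact ⟨hp.1, hp.2.1, hp.2.2.ne⟩
    · rw [hmem_t'] at hp; exact ⟨hp.1, hp.2.1, hp.2.2.ne'⟩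
  have hucard : u.card = 2 * t.card + 2 := by
    rw [hu, Finset.card_insert_of_notMem (by
        rw [Finset.mem_insert]; push_neg; exact ⟨hne2, hab⟩),
      Finset.card_insert_of_notMem hba,
      Finset.card_union_of_disjoint hdisj, ht',
      Finset.card_image_of_injective _ Prod.swap_injective]
    omega
  have := Finset.card_le_card husub
  omega

lemma prod_link (n : ℕ) (h : 1 ≤ n) : (n+1) * n = n * (n-1) + 2 * n := by
  obtain ⟨p, rfl⟩ : ∃ p, n = p + 1 := ⟨n-1, by omega⟩
  simp only [Nat.add_sub_cancel]
  ring

lemma lower_bound (n : ℕ) (hn : 3 ≤ n) (S : Finset (Finset ℕ))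
    (hsub : ∀ A ∈ S, A ⊆ Icc 1 n)
    (hU : ∀ A ∈ S, ∀ B ∈ S, A ∪ B ∈ S)
    (hsep : ∀ i ∈ Icc 1 n, ∀ j ∈ Icc 1 n, i ≠ j →
        ∃ A ∈ S, (i ∈ A ∧ j ∉ A) ∨ (j ∈ A ∧ i ∉ A))
    (hcard : S.card = n + 1) :
    n * (n - 1) / 2 + 1 ≤ ∑ A ∈ S, A.card := by
  classical
  have heven : 2 * (n * (n-1) / 2) = n * (n-1) := even_half n
  have hlink : (n+1) * n = n * (n-1) + 2 * n := prod_link n (by omega)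
  by_cases hchain : ∀ A ∈ S, ∀ B ∈ S, A ⊆ B ∨ B ⊆ A
  · -- chain case: weight = 0+1+...+n
    have hinj : ∀ A ∈ S, ∀ B ∈ S, A.card = B.card → A = B := by
      intro A hA B hB hAB
      by_contra hne
      rcases hchain A hA B hB with h | h
      · exact absurd hAB (Nat.ne_of_lt (card_lt_card (Finset.ssubset_iff_subset_ne.mpr ⟨h, hne⟩)))
      · exact absurd hAB.symm (Nat.ne_of_lt (card_lt_card
          (Finset.ssubset_iff_subset_ne.mpr ⟨h, Ne.symm hne⟩)))
    have himg : S.image Finset.card = range (n+1) := by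
      apply Finset.eq_of_subset_of_card_le
      · intro k hk
        simp only [mem_image] at hk
        obtain ⟨A, hA, rfl⟩ := hk
        rw [mem_range, Nat.lt_succ_iff]
        calc A.card ≤ (Icc 1 n).card := card_le_card (hsub A hA)
        _ = n := by rw [Nat.card_Icc]; omega
      · rw [card_range, Finset.card_image_of_injOn (fun A hA B hB => hinj A hA B hB), hcard]
    have hsum : ∑ A ∈ S, A.card = ∑ k ∈ range (n+1), k := by
      rw [← himg, Finset.sum_image hinj]
    have hg : (∑ k ∈ range (n+1), k) * 2 = (n+1) * n := by
      rw [Finset.sum_range_id_mul_two]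
      congr 1
    omega
  · -- non-chain case
    push_neg at hchain
    obtain ⟨A₀, hA₀, B₀, hB₀, h1, h2⟩ := hchain
    -- notation
    set W := ∑ A ∈ S, A.card with hW
    set c : ℕ → ℕ := fun i => (S.filter (fun A => i ∈ A)).card with hc
    set r : Finset ℕ → ℕ := fun B => (S.filter (fun A => A ⊆ B)).card with hr
    set f : ℕ → Finset ℕ := fun i => (S.filter (fun A => i ∉ A)).sup id with hf
    set D := (Icc 1 n).filter (fun i => ∀ A ∈ S, i ∈ A) with hD
    set G := (Icc 1 n).filter (fun i => ¬ ∀ A ∈ S, i ∈ A) with hG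
    -- weight identity
    have hw1 : W = ∑ i ∈ Icc 1 n, c i := weight_eq n S hsub
    -- facts about f on G
    have hGne : ∀ i ∈ G, (S.filter (fun A => i ∉ A)).Nonempty := by
      intro i hi
      rw [hG, mem_filter] at hi
      obtain ⟨A, hA, hiA⟩ := by push_neg at hi; exact hi.2
      exact ⟨A, mem_filter.mpr ⟨hA, hiA⟩⟩
    have hfS : ∀ i ∈ G, f i ∈ S := fun i hi =>
      sup_mem_uc hU (filter_subset _ _) (hGne i hi)
    have hfni : ∀ i ∈ G, i ∉ f i := by
      intro i hi hmem
      rw [hf] at hmem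
      rw [Finset.mem_sup] at hmem
      obtain ⟨A, hA, hiA⟩ := hmem
      rw [mem_filter] at hA
      exact hA.2 hiA
    have hchar : ∀ i ∈ G, ∀ A ∈ S, (A ⊆ f i ↔ i ∉ A) := by
      intro i hi A hA
      constructor
      · intro hAf hiA
        exact hfni i hi (hAf hiA)
      · intro hiA
        exact Finset.le_sup (f := id) (mem_filter.mpr ⟨hA, hiA⟩)
    have hci : ∀ i ∈ G, c i + r (f i) = n + 1 := by
      intro i hi
      have hpart := Finset.card_filter_add_card_filter_not
        (s := S) (p := fun A => i ∈ A)
      have : S.filter (fun A => ¬ i ∈ A) = S.filter (fun A => A ⊆ f i) := by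
        apply Finset.filter_congr
        intro A hA
        exact (hchar i hi A hA).symm
      rw [this] at hpart
      rw [hc, hr]
      rw [hpart] at *
      omega
    -- injectivity of f on G
    have hinjG : ∀ i ∈ G, ∀ j ∈ G, f i = f j → i = j := by
      intro i hi j hj hfij
      by_contra hij
      have hiI : i ∈ Icc 1 n := mem_of_mem_filter i hi
      have hjI : j ∈ Icc 1 n := mem_of_mem_filter j hj
      obtain ⟨A, hA, hsepA⟩ := hsep i hiI j hjI hij
      rcases hsepA with ⟨hiA, hjA⟩ | ⟨hjA, hiA⟩
      · have : A ⊆ f j := (hchar j hj A hA).mpr hjA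
        rw [← hfij] at this
        exact ((hchar i hi A hA).mp this) hiA
      · have : A ⊆ f i := (hchar i hi A hA).mpr hiA
        rw [hfij] at this
        exact ((hchar j hj A hA).mp this) hjA
    -- D small is not even needed; column sums
    have hsplitI : ∑ i ∈ D, c i + ∑ i ∈ G, c i = ∑ i ∈ Icc 1 n, c i :=
      Finset.sum_filter_add_sum_filter_not _ _ _
    have hsplitI2 : ∑ i ∈ D, (n+1) + ∑ i ∈ G, (n+1) = ∑ i ∈ Icc 1 n, (n+1 : ℕ) :=
      Finset.sum_filter_add_sum_filter_not _ _ _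
    have hDc : ∀ i ∈ D, c i = n + 1 := by
      intro i hi
      rw [hD, mem_filter] at hi
      rw [hc]
      simp only
      rw [Finset.filter_true_of_mem hi.2, hcard]
    have htot : ∑ i ∈ Icc 1 n, (n+1 : ℕ) = n * (n+1) := by
      rw [Finset.sum_const, Nat.card_Icc, smul_eq_mul]
      congr 1
    -- main accounting: SC + RG = n*(n+1)
    have hkey : (∑ i ∈ Icc 1 n, c i) + (∑ i ∈ G, r (f i)) = n * (n+1) := by
      rw [← hsplitI, ← htot, ← hsplitI2]
      have e1 : ∑ i ∈ D, c i = ∑ i ∈ D, (n+1 : ℕ) := Finset.sum_congr rfl hDc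
      have e2 : ∑ i ∈ G, c i + ∑ i ∈ G, r (f i) = ∑ i ∈ G, (n+1 : ℕ) := by
        rw [← Finset.sum_add_distrib]
        exact Finset.sum_congr rfl (fun i hi => hci i hi)
      omega
    -- image of f
    set F := G.image f with hF
    have hFS : F ⊆ S := by
      intro B hB
      rw [hF, mem_image] at hB
      obtain ⟨i, hi, rfl⟩ := hB
      exact hfS i hi
    have hFcard : F.card = G.card := Finset.card_image_of_injOn (fun i hi j hj => hinjG i hi j hj)
    have hRG : ∑ i ∈ G, r (f i) = ∑ B ∈ F, r B := (Finset.sum_image hinjG).symm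
    have hsdiff : ∑ B ∈ S \ F, r B + ∑ B ∈ F, r B = ∑ B ∈ S, r B := Finset.sum_sdiff hFS
    have hr1 : ∀ B ∈ S \ F, 1 ≤ r B := by
      intro B hB
      have hBS : B ∈ S := (Finset.mem_sdiff.mp hB).1
      rw [hr]
      exact Finset.card_pos.mpr ⟨B, mem_filter.mpr ⟨hBS, Finset.Subset.refl _⟩⟩
    have hlow : (S \ F).card ≤ ∑ B ∈ S \ F, r B := by
      rw [Finset.card_eq_sum_ones]
      exact Finset.sum_le_sum hr1
    have hcsd : (S \ F).card + F.card = n + 1 := by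
      rw [Finset.card_sdiff_add_card_eq_card hFS, hcard]
    have hGcard : G.card ≤ n := by
      calc G.card ≤ (Icc 1 n).card := card_le_card (filter_subset _ _)
      _ = n := by rw [Nat.card_Icc]; omega
    -- r-sum bound
    have hRS : ∑ B ∈ S, r B = (n+1) + ((S ×ˢ S).filter (fun p => p.1 ⊂ p.2)).card := by
      rw [hr]
      rw [rsum_eq S, hcard]
    have htb := t_bound S hA₀ hB₀ h1 h2
    have hoff : S.offDiag.card = (n+1) * (n+1) - (n+1) := by
      rw [Finset.offDiag_card, hcard]
    have hsq : (n+1) * (n+1) = n * (n+1) + (n+1) := by ring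
    have hNP : n * (n+1) = n * (n-1) + 2 * n := by
      rw [← hlink]; ring
    omega
section Example
variable (n : ℕ)

lemma Tmem (hn : 3 ≤ n) (A : Finset ℕ) :
    A ∈ insert ∅ (insert {n - 1} ((Icc 2 n).image (fun k => Icc k n))) ↔
      A = ∅ ∨ A = {n-1} ∨ ∃ k, 2 ≤ k ∧ k ≤ n ∧ A = Icc k n := by
  simp only [mem_insert, mem_image, mem_Icc]
  constructor
  · rintro (rfl | rfl | ⟨k, ⟨hk1, hk2⟩, rfl⟩)
    · exact Or.inl rfl
    · exact Or.inr (Or.inl rfl)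
    · exact Or.inr (Or.inr ⟨k, hk1, hk2, rfl⟩)
  · rintro (rfl | rfl | ⟨k, hk1, hk2, rfl⟩)
    · exact Or.inl rfl
    · exact Or.inr (Or.inl rfl)
    · exact Or.inr (Or.inr ⟨k, ⟨hk1, hk2⟩, rfl⟩)

lemma Tsub (hn : 3 ≤ n) :
    ∀ A ∈ insert ∅ (insert {n - 1} ((Icc 2 n).image (fun k => Icc k n))),
      A ⊆ Icc 1 n := by
  intro A hA
  rw [Tmem n hn] at hA
  rcases hA with rfl | rfl | ⟨k, hk1, hk2, rfl⟩
  · exact empty_subset _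
  · intro x hx
    rw [Finset.mem_singleton] at hx
    rw [mem_Icc]; omega
  · exact Finset.Icc_subset_Icc (by omega) le_rfl

lemma Tunion (hn : 3 ≤ n) :
    ∀ A ∈ insert ∅ (insert {n - 1} ((Icc 2 n).image (fun k => Icc k n))),
    ∀ B ∈ insert ∅ (insert {n - 1} ((Icc 2 n).image (fun k => Icc k n))),
      A ∪ B ∈ insert ∅ (insert {n - 1} ((Icc 2 n).image (fun k => Icc k n))) := by
  have key : ∀ k, 2 ≤ k → k ≤ n → ({n-1} : Finset ℕ) ∪ Icc k n ∈
      insert ∅ (insert {n - 1} ((Icc 2 n).image (fun k => Icc k n))) := by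
    intro k hk1 hk2
    rw [Tmem n hn]
    rcases Nat.lt_or_ge k n with h | h
    · -- k ≤ n-1 : n-1 ∈ Icc k n, union = Icc k n
      refine Or.inr (Or.inr ⟨k, hk1, hk2, ?_⟩)
      apply Finset.union_eq_right.mpr
      intro x hx
      rw [Finset.mem_singleton] at hx
      rw [mem_Icc]; omega
    · -- k = n : union = Icc (n-1) n
      refine Or.inr (Or.inr ⟨n-1, by omega, by omega, ?_⟩)
      ext x
      simp only [Finset.mem_union, Finset.mem_singleton, mem_Icc]
      omega
  intro A hA B hB
  rw [Tmem n hn] at hA hB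
  rcases hA with rfl | rfl | ⟨k, hk1, hk2, rfl⟩ <;>
    rcases hB with rfl | rfl | ⟨l, hl1, hl2, rfl⟩
  · simp [Tmem n hn]
  · rw [Finset.empty_union]; rw [Tmem n hn]; exact Or.inr (Or.inl rfl)
  · rw [Finset.empty_union]; rw [Tmem n hn]; exact Or.inr (Or.inr ⟨l, hl1, hl2, rfl⟩)
  · rw [Finset.union_empty]; rw [Tmem n hn]; exact Or.inr (Or.inl rfl)
  · rw [Finset.union_self]; rw [Tmem n hn]; exact Or.inr (Or.inl rfl)
  · exact key l hl1 hl2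
  · rw [Finset.union_empty]; rw [Tmem n hn]; exact Or.inr (Or.inr ⟨k, hk1, hk2, rfl⟩)
  · rw [Finset.union_comm]; exact key k hk1 hk2
  · rw [Tmem n hn]
    refine Or.inr (Or.inr ⟨min k l, by omega, by omega, ?_⟩)
    ext x
    simp only [Finset.mem_union, mem_Icc]
    omega

lemma Tsep (hn : 3 ≤ n) :
    ∀ i ∈ Icc 1 n, ∀ j ∈ Icc 1 n, i ≠ j →
      ∃ A ∈ insert ∅ (insert {n - 1} ((Icc 2 n).image (fun k => Icc k n))),
        (i ∈ A ∧ j ∉ A) ∨ (j ∈ A ∧ i ∉ A) := by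
  have key : ∀ i ∈ Icc 1 n, ∀ j ∈ Icc 1 n, i < j →
      ∃ A ∈ insert ∅ (insert {n - 1} ((Icc 2 n).image (fun k => Icc k n))),
        (i ∈ A ∧ j ∉ A) ∨ (j ∈ A ∧ i ∉ A) := by
    intro i hi j hj hij
    rw [mem_Icc] at hi hj
    refine ⟨Icc j n, ?_, Or.inr ⟨?_, ?_⟩⟩
    · rw [Tmem n hn]; exact Or.inr (Or.inr ⟨j, by omega, hj.2, rfl⟩)
    · rw [mem_Icc]; omega
    · rw [mem_Icc]; omega
  intro i hi j hj hij
  rcases Nat.lt_or_ge i j with h | h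
  · exact key i hi j hj h
  · have : j < i := by omega
    obtain ⟨A, hA, hA2⟩ := key j hj i hi this
    exact ⟨A, hA, hA2.symm⟩

lemma Tcard (hn : 3 ≤ n) :
    (insert ∅ (insert {n - 1} ((Icc 2 n).image (fun k => Icc k n)))).card = n + 1 := by
  have hinj : ∀ k ∈ Icc 2 n, ∀ l ∈ Icc 2 n, Icc k n = Icc l n → k = l := by
    intro k hk l hl h
    rw [mem_Icc] at hk hl
    have h1 : k ∈ Icc l n := h ▸ (mem_Icc.mpr ⟨le_rfl, hk.2⟩)
    have h2 : l ∈ Icc k n := h ▸ (mem_Icc.mpr ⟨le_rfl, hl.2⟩)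
    rw [mem_Icc] at h1 h2
    omega
  have himg : ((Icc 2 n).image (fun k => Icc k n)).card = n - 1 := by
    rw [Finset.card_image_of_injOn hinj, Nat.card_Icc]
    omega
  have hs1 : ({n-1} : Finset ℕ) ∉ (Icc 2 n).image (fun k => Icc k n) := by
    rw [mem_image]
    rintro ⟨k, hk, hkeq⟩
    rw [mem_Icc] at hk
    have : n ∈ Icc k n := mem_Icc.mpr ⟨hk.2, le_rfl⟩
    rw [hkeq, Finset.mem_singleton] at this
    omega
  have hs0 : (∅ : Finset ℕ) ∉ insert {n-1} ((Icc 2 n).image (fun k => Icc k n)) := by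
    rw [mem_insert, mem_image]
    push_neg
    constructor
    · intro h
      have : n - 1 ∈ ({n-1} : Finset ℕ) := Finset.mem_singleton_self _
      rw [← h] at this
      exact absurd this (Finset.notMem_empty _)
    · rintro k hk
      rw [mem_Icc] at hk
      exact ⟨k, mem_Icc.mpr ⟨le_rfl, hk.2⟩⟩
  rw [Finset.card_insert_of_notMem hs0, Finset.card_insert_of_notMem hs1, himg]
  omega

end Example
lemma Tweight (n : ℕ) (hn : 3 ≤ n) :
    ∑ A ∈ insert ∅ (insert {n - 1} ((Icc 2 n).image (fun k => Icc k n))), A.card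
      = n * (n - 1) / 2 + 1 := by
  have hinj : ∀ k ∈ Icc 2 n, ∀ l ∈ Icc 2 n, Icc k n = Icc l n → k = l := by
    intro k hk l hl h
    rw [mem_Icc] at hk hl
    have h1 : k ∈ Icc l n := h ▸ (mem_Icc.mpr ⟨le_rfl, hk.2⟩)
    have h2 : l ∈ Icc k n := h ▸ (mem_Icc.mpr ⟨le_rfl, hl.2⟩)
    rw [mem_Icc] at h1 h2
    omega
  have hs1 : ({n-1} : Finset ℕ) ∉ (Icc 2 n).image (fun k => Icc k n) := by
    rw [mem_image]
    rintro ⟨k, hk, hkeq⟩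
    rw [mem_Icc] at hk
    have : n ∈ Icc k n := mem_Icc.mpr ⟨hk.2, le_rfl⟩
    rw [hkeq, Finset.mem_singleton] at this
    omega
  have hs0 : (∅ : Finset ℕ) ∉ insert {n-1} ((Icc 2 n).image (fun k => Icc k n)) := by
    rw [mem_insert, mem_image]
    push_neg
    constructor
    · intro h
      have : n - 1 ∈ ({n-1} : Finset ℕ) := Finset.mem_singleton_self _
      rw [← h] at this
      exact absurd this (Finset.notMem_empty _)
    · rintro k hk
      rw [mem_Icc] at hk
      exact ⟨k, mem_Icc.mpr ⟨le_rfl, hk.2⟩⟩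
  rw [Finset.sum_insert hs0, Finset.sum_insert hs1, Finset.sum_image hinj]
  have he : ∑ k ∈ Icc 2 n, (Icc k n).card = ∑ k ∈ Icc 2 n, (n + 1 - k) :=
    Finset.sum_congr rfl (fun k _ => Nat.card_Icc k n)
  rw [he]
  have hg := gauss_aux n
  have hh := even_half n
  simp only [Finset.card_empty, Finset.card_singleton]
  omega

/-- For `n ≥ 3`: every separating union-closed family on `[n]` with exactly
`n+1` members has weight at least `n(n-1)/2 + 1`, and the family
`T_n ∪ {∅} ∪ {{n-1}}` attains this bound: it is a separating union-closed
family on `[n]` of size `n+1` with weight exactly `n(n-1)/2 + 1`. -/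
theorem separating_unionClosed_size_succ_weight (n : ℕ) (hn : 3 ≤ n) :
    (∀ S : Finset (Finset ℕ),
      (∀ A ∈ S, A ⊆ Finset.Icc 1 n) →
      (∀ A ∈ S, ∀ B ∈ S, A ∪ B ∈ S) →
      (∀ i ∈ Finset.Icc 1 n, ∀ j ∈ Finset.Icc 1 n, i ≠ j →
        ∃ A ∈ S, (i ∈ A ∧ j ∉ A) ∨ (j ∈ A ∧ i ∉ A)) →
      S.card = n + 1 →
      n * (n - 1) / 2 + 1 ≤ ∑ A ∈ S, A.card) ∧
    (let T : Finset (Finset ℕ) :=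
        insert ∅ (insert {n - 1} ((Finset.Icc 2 n).image (fun k => Finset.Icc k n)));
      (∀ A ∈ T, A ⊆ Finset.Icc 1 n) ∧
      (∀ A ∈ T, ∀ B ∈ T, A ∪ B ∈ T) ∧
      (∀ i ∈ Finset.Icc 1 n, ∀ j ∈ Finset.Icc 1 n, i ≠ j →
        ∃ A ∈ T, (i ∈ A ∧ j ∉ A) ∨ (j ∈ A ∧ i ∉ A)) ∧
      T.card = n + 1 ∧
      ∑ A ∈ T, A.card = n * (n - 1) / 2 + 1) := by
  constructor
  · intro S hsub hU hsep hcard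
    exact lower_bound n hn S hsub hU hsep hcard
  · exact ⟨Tsub n hn, Tunion n hn, Tsep n hn, Tcard n hn, Tweight n hn⟩
end

section
/- Let t ≥ 1 and let b = b_1 > b_2 > ... > b_t ≥ 0 be integers. Define families of subsets of [b+1] = {1,...,b+1} by Q_1 = { X ∪ {b+1} : X ⊆ [b] } and, for 2 ≤ i ≤ t, Q_i = { X ∪ {b_{i−1}} : X ⊆ [b_i] }. Then the families Q_1, ..., Q_t are pairwise disjoint, and their union B = ⋃_{i=1}^t Q_i is union-closed and separates every pair of distinct elements of [b+1]; in particular |B| = ∑_{i=1}^t 2^{b_i}. -/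
/-- Properties of the base family `B = ⋃ᵢ Qᵢ` of the intermediate construction:
given integers `b 1 > b 2 > … > b t ≥ 0` (`t ≥ 1`), with
`Q 1 = { X ∪ {b 1 + 1} : X ⊆ [b 1] }` and
`Q i = { X ∪ {b (i-1)} : X ⊆ [b i] }` for `2 ≤ i ≤ t`, the families `Q i` are
pairwise disjoint, and `B` is union-closed and separates every pair of
distinct elements of `[b 1 + 1]`; in particular `|B| = ∑ᵢ 2 ^ (b i)`. -/
theorem base_family_properties (t : ℕ) (ht : 1 ≤ t) (b : ℕ → ℕ)
    (hdec : ∀ i j : ℕ, 1 ≤ i → i < j → j ≤ t → b j < b i)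
    (Q : ℕ → Finset (Finset ℕ))
    (hQ1 : Q 1 = (Finset.Icc 1 (b 1)).powerset.image (fun X => insert (b 1 + 1) X))
    (hQi : ∀ i : ℕ, 2 ≤ i → i ≤ t →
      Q i = (Finset.Icc 1 (b i)).powerset.image (fun X => insert (b (i - 1)) X))
    (B : Finset (Finset ℕ)) (hB : B = (Finset.Icc 1 t).biUnion Q) :
    (∀ i ∈ Finset.Icc 1 t, ∀ j ∈ Finset.Icc 1 t, i ≠ j → Disjoint (Q i) (Q j)) ∧
    (∀ A ∈ B, ∀ A' ∈ B, A ∪ A' ∈ B) ∧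
    (∀ i ∈ Finset.Icc 1 (b 1 + 1), ∀ j ∈ Finset.Icc 1 (b 1 + 1), i ≠ j →
      ∃ A ∈ B, (i ∈ A ∧ j ∉ A) ∨ (j ∈ A ∧ i ∉ A)) ∧
    B.card = ∑ i ∈ Finset.Icc 1 t, 2 ^ b i := by
  -- the "marker" element of each family
  set m : ℕ → ℕ := fun i => if i = 1 then b 1 + 1 else b (i - 1) with hm_def
  have hQ : ∀ i, 1 ≤ i → i ≤ t →
      Q i = (Finset.Icc 1 (b i)).powerset.image (fun X => insert (m i) X) := by
    intro i hi1 hit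
    rcases eq_or_lt_of_le hi1 with h1 | h2
    · rw [← h1]
      simpa [hm_def] using hQ1
    · have hne : i ≠ 1 := by omega
      rw [hQi i (by omega) hit]
      simp [hm_def, hne]
  have hbm : ∀ i, 1 ≤ i → i ≤ t → b i < m i := by
    intro i hi1 hit
    by_cases h : i = 1
    · subst h; simp [hm_def]
    · have : b i < b (i - 1) := hdec (i - 1) i (by omega) (by omega) hit
      simpa [hm_def, h] using this
  have hmle : ∀ i j, 1 ≤ i → i < j → j ≤ t → m j ≤ b i := by
    intro i j hi hij hjt
    have hj1 : j ≠ 1 := by omega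
    have hmj : m j = b (j - 1) := by simp [hm_def, hj1]
    rcases eq_or_lt_of_le (Nat.succ_le_of_lt hij) with h | h
    · rw [hmj]
      have : j - 1 = i := by omega
      rw [this]
    · have : b (j - 1) < b i := hdec i (j - 1) hi (by omega) (by omega)
      omega
  have hmem : ∀ i, 1 ≤ i → i ≤ t → ∀ A : Finset ℕ,
      A ∈ Q i ↔ m i ∈ A ∧ A ⊆ insert (m i) (Finset.Icc 1 (b i)) := by
    intro i hi1 hit A
    rw [hQ i hi1 hit]
    constructor
    · intro hA
      rw [Finset.mem_image] at hA
      obtain ⟨X, hX, rfl⟩ := hA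
      rw [Finset.mem_powerset] at hX
      exact ⟨Finset.mem_insert_self _ _, Finset.insert_subset_insert _ hX⟩
    · rintro ⟨h1, h2⟩
      rw [Finset.mem_image]
      refine ⟨A.erase (m i), ?_, Finset.insert_erase h1⟩
      rw [Finset.mem_powerset]
      intro x hx
      have hxA := Finset.mem_of_mem_erase hx
      have hxne := Finset.ne_of_mem_erase hx
      have := h2 hxA
      rw [Finset.mem_insert] at this
      tauto
  -- elements of a set in `Q j` fit inside `insert (m i) (Icc 1 (b i))` when `i ≤ j`
  have hsub : ∀ i j, 1 ≤ i → i ≤ j → j ≤ t → ∀ A ∈ Q j,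
      A ⊆ insert (m i) (Finset.Icc 1 (b i)) := by
    intro i j hi1 hij hjt A hA
    have h := ((hmem j (by omega) hjt A).mp hA).2
    rcases eq_or_lt_of_le hij with h' | h'
    · subst h'; exact h
    · intro x hx
      have hx' := h hx
      have h1 : m j ≤ b i := hmle i j hi1 h' hjt
      have h2 : b j < b i := hdec i j hi1 h' hjt
      have h3 : b j < m j := hbm j (by omega) hjt
      simp only [Finset.mem_insert, Finset.mem_Icc] at hx' ⊢
      omega
  have hdisj : ∀ i ∈ Finset.Icc 1 t, ∀ j ∈ Finset.Icc 1 t, i ≠ j →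
      Disjoint (Q i) (Q j) := by
    have key : ∀ i j, 1 ≤ i → i < j → j ≤ t → Disjoint (Q i) (Q j) := by
      intro i j hi hij hjt
      rw [Finset.disjoint_left]
      intro A hAi hAj
      have h1 := (hmem i hi (by omega) A).mp hAi
      have h2 := (hmem j (by omega) hjt A).mp hAj
      have hmi := h2.2 h1.1
      have hji : m j ≤ b i := hmle i j hi hij hjt
      have hbi : b i < m i := hbm i hi (by omega)
      have hbj : b j < m j := hbm j (by omega) hjt
      simp only [Finset.mem_insert, Finset.mem_Icc] at hmi
      omega
    intro i hi j hj hne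
    simp only [Finset.mem_Icc] at hi hj
    rcases lt_or_gt_of_ne hne with h | h
    · exact key i j hi.1 h hj.2
    · exact (key j i hj.1 h hi.2).symm
  refine ⟨hdisj, ?_, ?_, ?_⟩
  · -- union-closed
    intro A hA A' hA'
    rw [hB, Finset.mem_biUnion] at hA hA' ⊢
    obtain ⟨i, hi, hAi⟩ := hA
    obtain ⟨j, hj, hAj⟩ := hA'
    simp only [Finset.mem_Icc] at hi hj
    rcases le_total i j with hij | hij
    · refine ⟨i, by simp [Finset.mem_Icc]; omega, (hmem i hi.1 hi.2 _).mpr ⟨?_, ?_⟩⟩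
      · exact Finset.mem_union_left _ ((hmem i hi.1 hi.2 A).mp hAi).1
      · exact Finset.union_subset (hsub i i hi.1 le_rfl hi.2 A hAi)
          (hsub i j hi.1 hij hj.2 A' hAj)
    · refine ⟨j, by simp [Finset.mem_Icc]; omega, (hmem j hj.1 hj.2 _).mpr ⟨?_, ?_⟩⟩
      · exact Finset.mem_union_right _ ((hmem j hj.1 hj.2 A').mp hAj).1
      · exact Finset.union_subset (hsub j i hj.1 hij hi.2 A hAi)
          (hsub j j hj.1 le_rfl hj.2 A' hAj)
  · -- separation
    have hQ1B : ∀ A ∈ Q 1, A ∈ B := by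
      intro A hA
      rw [hB, Finset.mem_biUnion]
      exact ⟨1, by simp [Finset.mem_Icc]; omega, hA⟩
    have hsingle : ∀ x, 1 ≤ x → x ≤ b 1 → insert (b 1 + 1) {x} ∈ Q 1 := by
      intro x h1 h2
      rw [hQ1, Finset.mem_image]
      exact ⟨{x}, by simp [Finset.mem_Icc]; omega, rfl⟩
    have hempty : ({b 1 + 1} : Finset ℕ) ∈ Q 1 := by
      rw [hQ1, Finset.mem_image]
      exact ⟨∅, by simp, by simp⟩
    intro i hi j hj hne
    simp only [Finset.mem_Icc] at hi hj
    by_cases hib : i = b 1 + 1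
    · refine ⟨{b 1 + 1}, hQ1B _ hempty, Or.inl ⟨by simp [hib], by simp; omega⟩⟩
    · by_cases hjb : j = b 1 + 1
      · refine ⟨{b 1 + 1}, hQ1B _ hempty, Or.inr ⟨by simp [hjb], by simp; omega⟩⟩
      · refine ⟨insert (b 1 + 1) {i}, hQ1B _ (hsingle i hi.1 (by omega)),
          Or.inl ⟨by simp, ?_⟩⟩
        simp only [Finset.mem_insert, Finset.mem_singleton]
        omega
  · -- cardinality
    have hcardQ : ∀ i ∈ Finset.Icc 1 t, (Q i).card = 2 ^ b i := by
      intro i hi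
      simp only [Finset.mem_Icc] at hi
      rw [hQ i hi.1 hi.2, Finset.card_image_of_injOn, Finset.card_powerset,
        Nat.card_Icc]
      · simp
      · intro X hX Y hY h
        simp only [Finset.mem_coe, Finset.mem_powerset] at hX hY
        have hbi : b i < m i := hbm i hi.1 hi.2
        have hX' : m i ∉ X := fun hc => by
          have := (Finset.mem_Icc.mp (hX hc)).2; omega
        have hY' : m i ∉ Y := fun hc => by
          have := (Finset.mem_Icc.mp (hY hc)).2; omega
        have h' : insert (m i) X = insert (m i) Y := h
        rw [← Finset.erase_insert hX', ← Finset.erase_insert hY', h']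
    rw [hB, Finset.card_biUnion hdisj]
    exact Finset.sum_congr rfl hcardQ
end

section
/- For every integer r ≥ 2 there exists a separating union-closed family S on a finite set Ω with |S| = 2^r and |Ω| = ⌈√(r·2^r)⌉ whose average degree satisfies (1/|Ω|) · ∑_{x ∈ Ω} d_S(x) ≤ √(m · log₂ m) + 3·√(m / log₂ m), where m = 2^r. In particular there exist arbitrarily large separating union-closed families whose average degree is at most √(m log₂ m) + 3√(m/log₂ m). -/
open Finset

private lemma sum_powerset_card_two (s : Finset ℕ) :
    (∑ A ∈ s.powerset, A.card) * 2 = s.card * 2 ^ s.card := by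
  induction s using Finset.induction_on with
  | empty => simp
  | insert a s ha ih =>
    rw [powerset_insert, sum_union, sum_image]
    · have h1 : ∑ A ∈ s.powerset, (insert a A).card = (∑ A ∈ s.powerset, A.card) + 2 ^ s.card := by
        have : ∀ A ∈ s.powerset, (insert a A).card = A.card + 1 := fun A hA =>
          card_insert_of_notMem (fun h => ha (mem_powerset.1 hA h))
        rw [sum_congr rfl this, sum_add_distrib, sum_const, smul_eq_mul, mul_one, card_powerset]
      rw [h1, card_insert_of_notMem ha]
      have : (∑ A ∈ s.powerset, A.card + (∑ A ∈ s.powerset, A.card + 2 ^ s.card)) * 2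
          = ((∑ A ∈ s.powerset, A.card) * 2) * 2 + 2 ^ s.card * 2 := by ring
      rw [this, ih, pow_succ]
      ring
    · intro A hA B hB h
      have haA : a ∉ A := fun h' => ha (mem_powerset.1 hA h')
      have haB : a ∉ B := fun h' => ha (mem_powerset.1 hB h')
      rw [← erase_insert haA, h, erase_insert haB]
    · rw [disjoint_left]
      intro A hA hA'
      obtain ⟨B, hB, rfl⟩ := mem_image.1 hA'
      exact ha (mem_powerset.1 hA (mem_insert_self a B))

private lemma bin_lt {r : ℕ} {A : Finset ℕ} (h : A ⊆ range r) : ∑ i ∈ A, 2 ^ i < 2 ^ r :=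
  Nat.geomSum_lt le_rfl fun _ hk => mem_range.1 (h hk)

private lemma image_bin (r : ℕ) :
    ((range r).powerset.image (fun A => ∑ i ∈ A, 2 ^ i)) = range (2 ^ r) := by
  apply eq_of_subset_of_card_le
  · intro v hv
    obtain ⟨A, hA, rfl⟩ := mem_image.1 hv
    exact mem_range.2 (bin_lt (mem_powerset.1 hA))
  · rw [card_range, card_image_of_injective _ (Finset.geomSum_injective le_rfl),
      card_powerset, card_range]

private lemma ceil_sqrt_le {a b : ℕ} (h : a ≤ b ^ 2) : ⌈Real.sqrt (a : ℝ)⌉₊ ≤ b := by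
  rw [Nat.ceil_le]
  calc Real.sqrt a ≤ Real.sqrt ((b : ℝ) ^ 2) := Real.sqrt_le_sqrt (by exact_mod_cast h)
    _ = b := Real.sqrt_sq (by positivity)

private lemma four_le_two_pow (r : ℕ) (hr : 4 ≤ r) : r ≤ 2 ^ (r - 2) := by
  obtain ⟨s, rfl⟩ : ∃ s, r = s + 4 := ⟨r - 4, by omega⟩
  induction s with
  | zero => norm_num
  | succ k ih =>
    have h1 : k + 4 ≤ 2 ^ (k + 4 - 2) := ih (by omega)
    have h2 : (2:ℕ) ^ (k + 1 + 4 - 2) = 2 ^ (k + 4 - 2) * 2 := by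
      have he : k + 1 + 4 - 2 = (k + 4 - 2) + 1 := by omega
      rw [he, pow_succ]
    omega

private lemma sum_range_two_pow (r : ℕ) : ∑ i ∈ range r, 2 ^ i = 2 ^ r - 1 := by
  induction r with
  | zero => simp
  | succ k ih2 =>
    rw [sum_range_succ, ih2]
    have : (2:ℕ) ^ (k+1) = 2 ^ k * 2 := by rw [pow_succ]
    have h1 : (1:ℕ) ≤ 2 ^ k := Nat.one_le_two_pow
    omega

private lemma range_injective' : Function.Injective (Finset.range) :=
  fun a b h => by simpa using congrArg Finset.card h

/-- For every `r ≥ 2` there is a separating union-closed family `S` on a set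
`Ω` with `|S| = 2^r` and `|Ω| = ⌈√(r·2^r)⌉` whose average degree is at most
`√(m·log₂ m) + 3·√(m/log₂ m)` where `m = 2^r`. -/
theorem exists_separating_unionClosed_small_average_degree (r : ℕ) (hr : 2 ≤ r) :
    ∃ (Ω : Finset ℕ) (S : Finset (Finset ℕ)),
      (∀ A ∈ S, A ⊆ Ω) ∧
      (∀ A ∈ S, ∀ B ∈ S, A ∪ B ∈ S) ∧
      (∀ i ∈ Ω, ∀ j ∈ Ω, i ≠ j →
        ∃ A ∈ S, (i ∈ A ∧ j ∉ A) ∨ (j ∈ A ∧ i ∉ A)) ∧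
      S.card = 2 ^ r ∧
      Ω.card = ⌈Real.sqrt ((r : ℝ) * 2 ^ r)⌉₊ ∧
      (1 / (Ω.card : ℝ)) * ∑ x ∈ Ω, ((S.filter (fun A => x ∈ A)).card : ℝ)
        ≤ Real.sqrt ((2 ^ r : ℝ) * Real.logb 2 (2 ^ r))
          + 3 * Real.sqrt ((2 ^ r : ℝ) / Real.logb 2 (2 ^ r)) := by
  set x : ℝ := Real.sqrt ((r : ℝ) * 2 ^ r) with hxdef
  set n : ℕ := ⌈x⌉₊ with hndef
  have hx0 : 0 ≤ x := Real.sqrt_nonneg _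
  have hcast : ((r * 2 ^ r : ℕ) : ℝ) = (r : ℝ) * 2 ^ r := by push_cast; ring
  -- upper bounds on n from nat squares
  have hnb : ∀ b : ℕ, r * 2 ^ r ≤ b ^ 2 → n ≤ b := by
    intro b hb
    have := ceil_sqrt_le hb
    rwa [hcast] at this
  have h2r : r < 2 ^ r := Nat.lt_two_pow_self
  -- r ≤ n
  have hrx : (r : ℝ) ≤ x := by
    have h1 : ((r:ℝ)) = Real.sqrt ((r:ℝ)^2) := (Real.sqrt_sq (by positivity)).symm
    rw [h1]
    apply Real.sqrt_le_sqrt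
    have : (r:ℝ) ≤ 2 ^ r := by exact_mod_cast h2r.le
    nlinarith [this, (by positivity : (0:ℝ) ≤ (r:ℝ))]
  have hrn : r ≤ n := by
    calc r = ⌈(r:ℝ)⌉₊ := by simp
      _ ≤ n := Nat.ceil_mono hrx
  -- n ≤ 2^(r-1) + r - 1
  have hpow2 : 2 ^ (r - 1) * 2 = 2 ^ r := by
    rw [← pow_succ]; congr 1; omega
  have hone : 1 ≤ 2 ^ (r - 1) := Nat.one_le_two_pow
  have hnle : n ≤ 2 ^ (r - 1) + r - 1 := by
    by_cases h4 : 4 ≤ r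
    · have h1 : r * 2 ^ r ≤ (2 ^ (r - 1)) ^ 2 := by
        calc r * 2 ^ r ≤ 2 ^ (r - 2) * 2 ^ r := Nat.mul_le_mul_right _ (four_le_two_pow r h4)
          _ = (2 ^ (r - 1)) ^ 2 := by rw [← pow_add, ← pow_mul]; congr 1; omega
      have := hnb _ h1
      omega
    · interval_cases r
      · exact le_trans (hnb 3 (by norm_num)) (by norm_num)
      · exact le_trans (hnb 6 (by norm_num)) (by norm_num)
  set d : ℕ := n - r with hddef
  have hd1 : d ≤ 2 ^ (r - 1) - 1 := by omega
  set S₁ : Finset (Finset ℕ) :=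
    (range r).powerset.filter (fun A => d ≤ ∑ i ∈ A, 2 ^ i) with hS₁def
  set S₂ : Finset (Finset ℕ) := (Icc (r + 1) n).image Finset.range with hS₂def
  set S : Finset (Finset ℕ) := S₁ ∪ S₂ with hSdef
  have hS₁mem : ∀ A, A ∈ S₁ ↔ A ⊆ range r ∧ d ≤ ∑ i ∈ A, 2 ^ i := by
    intro A; rw [hS₁def, mem_filter, mem_powerset]
  have hS₂mem : ∀ B, B ∈ S₂ ↔ ∃ k, (r + 1 ≤ k ∧ k ≤ n) ∧ B = range k := by
    intro B
    rw [hS₂def, mem_image]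
    constructor
    · rintro ⟨k, hk, rfl⟩; exact ⟨k, mem_Icc.1 hk, rfl⟩
    · rintro ⟨k, hk, rfl⟩; exact ⟨k, mem_Icc.2 hk, rfl⟩
  -- subsets of Ω
  have hsub : ∀ A ∈ S, A ⊆ range n := by
    intro A hA
    rcases mem_union.1 hA with h | h
    · exact ((hS₁mem A).1 h).1.trans (range_subset_range.2 hrn)
    · obtain ⟨k, hk, rfl⟩ := (hS₂mem A).1 h
      exact range_subset_range.2 hk.2
  -- union closed
  have hUC : ∀ A ∈ S, ∀ B ∈ S, A ∪ B ∈ S := by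
    intro A hA B hB
    rcases mem_union.1 hA with h1 | h1 <;> rcases mem_union.1 hB with h2 | h2
    · obtain ⟨hA1, hA2⟩ := (hS₁mem A).1 h1
      obtain ⟨hB1, hB2⟩ := (hS₁mem B).1 h2
      refine mem_union_left _ ((hS₁mem _).2 ⟨union_subset hA1 hB1, le_trans hA2 ?_⟩)
      exact sum_le_sum_of_subset subset_union_left
    · obtain ⟨k, hk, rfl⟩ := (hS₂mem B).1 h2
      have : A ∪ range k = range k := union_eq_right.2
        (((hS₁mem A).1 h1).1.trans (range_subset_range.2 (by omega)))
      rw [this]; exact mem_union_right _ h2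
    · obtain ⟨k, hk, rfl⟩ := (hS₂mem A).1 h1
      have : range k ∪ B = range k := union_eq_left.2
        (((hS₁mem B).1 h2).1.trans (range_subset_range.2 (by omega)))
      rw [this]; exact mem_union_right _ h1
    · obtain ⟨k, hk, rfl⟩ := (hS₂mem A).1 h1
      obtain ⟨l, hl, rfl⟩ := (hS₂mem B).1 h2
      have : range k ∪ range l = range (max k l) := by
        ext t; simp [mem_union, mem_range, lt_max_iff]
      rw [this]
      exact mem_union_right _ ((hS₂mem _).2 ⟨max k l, ⟨by omega, by omega⟩, rfl⟩)
  -- separation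
  have hbinrange : ∑ i ∈ range r, 2 ^ i = 2 ^ r - 1 := sum_range_two_pow r
  have hsep0 : ∀ i j, i < j → j < n → ∃ A ∈ S, i ∈ A ∧ j ∉ A ∨ j ∈ A ∧ i ∉ A := by
    intro i j hij hjn
    by_cases hjr : j < r
    · -- both below r : use (range r).erase i
      have hir : i < r := lt_trans hij hjr
      refine ⟨(range r).erase i, mem_union_left _ ((hS₁mem _).2 ⟨?_, ?_⟩), Or.inr
        ⟨mem_erase.2 ⟨(Nat.ne_of_lt hij).symm, mem_range.2 hjr⟩, fun h => (mem_erase.1 h).1 rfl⟩⟩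
      · exact (erase_subset _ _)
      · have hsum : (∑ t ∈ (range r).erase i, 2 ^ t) + 2 ^ i = ∑ t ∈ range r, 2 ^ t :=
          sum_erase_add _ _ (mem_range.2 hir)
        have h2i : 2 ^ i ≤ 2 ^ (r - 1) := Nat.pow_le_pow_right (by norm_num) (by omega)
        omega
    · by_cases hir : i < r
      · -- i < r ≤ j : use range r
        refine ⟨range r, mem_union_left _ ((hS₁mem _).2 ⟨subset_rfl, ?_⟩), Or.inl
          ⟨mem_range.2 hir, by simp; omega⟩⟩
        rw [hbinrange]; omega
      · -- r ≤ i < j : use range (i+1)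
        refine ⟨range (i + 1), mem_union_right _ ((hS₂mem _).2 ⟨i + 1, ⟨by omega, by omega⟩, rfl⟩),
          Or.inl ⟨mem_range.2 (by omega), by simp; omega⟩⟩
  -- disjointness and cardinalities
  have hdisj : Disjoint S₁ S₂ := by
    rw [disjoint_left]
    intro A hA1 hA2
    obtain ⟨k, hk, rfl⟩ := (hS₂mem A).1 hA2
    have : r ∈ range k := mem_range.2 (by omega)
    exact absurd (mem_range.1 (((hS₁mem _).1 hA1).1 this)) (lt_irrefl r)
  have hS₂card : S₂.card = d := by
    rw [hS₂def, card_image_of_injective _ range_injective', Nat.card_Icc]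
    omega
  have hS₁card : S₁.card = 2 ^ r - d := by
    have hinj : Function.Injective (fun A : Finset ℕ => ∑ i ∈ A, 2 ^ i) :=
      Finset.geomSum_injective le_rfl
    have h2 : S₁.card = (S₁.image (fun A => ∑ i ∈ A, 2 ^ i)).card :=
      (card_image_of_injective _ hinj).symm
    have hfilt : S₁.image (fun A => ∑ i ∈ A, 2 ^ i)
        = (range (2 ^ r)).filter (fun v => d ≤ v) := by
      rw [hS₁def, ← filter_image, image_bin r]
    rw [h2, hfilt]
    have : (range (2 ^ r)).filter (fun v => d ≤ v) = Ico d (2 ^ r) := by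
      ext v; simp only [mem_filter, mem_range, mem_Ico]; tauto
    rw [this, Nat.card_Ico]
  have hScard : S.card = 2 ^ r := by
    rw [hSdef, card_union_of_disjoint hdisj, hS₁card, hS₂card]
    omega
  -- double counting
  have hdc : ∑ y ∈ range n, ((S.filter (fun A => y ∈ A)).card) = ∑ A ∈ S, A.card := by
    simp only [card_filter]
    rw [sum_comm]
    refine sum_congr rfl fun A hA => ?_
    rw [← card_filter, filter_mem_eq_inter, inter_eq_right.2 (hsub A hA)]
  -- bounding the total size
  have hS1sum : (∑ A ∈ S₁, A.card) * 2 ≤ r * 2 ^ r := by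
    have h1 : (∑ A ∈ S₁, A.card) ≤ ∑ A ∈ (range r).powerset, A.card :=
      sum_le_sum_of_subset (by rw [hS₁def]; exact filter_subset _ _)
    calc (∑ A ∈ S₁, A.card) * 2 ≤ (∑ A ∈ (range r).powerset, A.card) * 2 :=
          Nat.mul_le_mul_right _ h1
      _ = r * 2 ^ r := by rw [sum_powerset_card_two, card_range]
  have hIcc : ∑ k ∈ Icc (r + 1) n, k = d * (r + 1) + ∑ i ∈ range d, i := by
    rw [← Finset.Ico_add_one_right_eq_Icc, Finset.sum_Ico_eq_sum_range]
    have hL : n + 1 - (r + 1) = d := by omega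
    rw [hL, sum_add_distrib, sum_const, card_range, smul_eq_mul]
  have hS2sum : (∑ B ∈ S₂, B.card) * 2 ≤ d * (r + 1) * 2 + d * d := by
    have h1 : ∑ B ∈ S₂, B.card = ∑ k ∈ Icc (r + 1) n, k := by
      rw [hS₂def, sum_image (fun a _ b _ h => range_injective' h)]
      simp [card_range]
    rw [h1, hIcc]
    have h2 : (∑ i ∈ range d, i) * 2 = d * (d - 1) := sum_range_id_mul_two d
    have h3 : d * (d - 1) ≤ d * d := Nat.mul_le_mul_left _ (Nat.sub_le _ _)
    have : (d * (r + 1) + ∑ i ∈ range d, i) * 2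
        = d * (r + 1) * 2 + (∑ i ∈ range d, i) * 2 := by ring
    omega
  have hTsum : (∑ A ∈ S, A.card) * 2 ≤ r * 2 ^ r + (d * (r + 1) * 2 + d * d) := by
    rw [hSdef, sum_union hdisj]
    have : (∑ A ∈ S₁, A.card + ∑ B ∈ S₂, B.card) * 2
        = (∑ A ∈ S₁, A.card) * 2 + (∑ B ∈ S₂, B.card) * 2 := by ring
    omega
  -- assemble
  refine ⟨range n, S, hsub, hUC, ?_, hScard, by rw [card_range], ?_⟩
  · intro i hi j hj hij
    rcases Nat.lt_or_ge i j with h | h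
    · exact hsep0 i j h (mem_range.1 hj)
    · obtain ⟨A, hA, hA'⟩ := hsep0 j i (by omega) (mem_range.1 hi)
      exact ⟨A, hA, hA'.symm⟩
  · -- the average degree bound
    have hlogb : Real.logb 2 ((2 : ℝ) ^ r) = r := by
      rw [Real.logb_pow]; simp [Real.logb_self_eq_one]
    rw [card_range, hlogb]
    have hn0 : 0 < (n : ℝ) := by
      have : 0 < n := by omega
      exact_mod_cast this
    rw [one_div, inv_mul_le_iff₀ hn0]
    have hsum' : ∑ y ∈ range n, (((S.filter (fun A => y ∈ A)).card : ℝ))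
        = ((∑ A ∈ S, A.card : ℕ) : ℝ) := by
      rw [← hdc]; push_cast; ring
    rw [hsum']
    -- real versions of facts
    have hxsq : x ^ 2 = (r : ℝ) * 2 ^ r := Real.sq_sqrt (by positivity)
    have hxn : x ≤ (n : ℝ) := Nat.le_ceil x
    have hnx : (n : ℝ) ≤ x + 1 := (Nat.ceil_lt_add_one hx0).le
    have hdcast : ((d : ℕ) : ℝ) = (n : ℝ) - r := by
      rw [hddef, Nat.cast_sub hrn]
    have hr2 : (2 : ℝ) ≤ (r : ℝ) := by exact_mod_cast hr
    have hTR : ((∑ A ∈ S, A.card : ℕ) : ℝ) * 2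
        ≤ (r : ℝ) * 2 ^ r + (((d:ℕ) : ℝ) * (r + 1) * 2 + ((d:ℕ) : ℝ) * ((d:ℕ) : ℝ)) := by
      exact_mod_cast hTsum
    have key : ((∑ A ∈ S, A.card : ℕ) : ℝ) ≤ (n : ℝ) * (x + 3) := by
      have hD0 : (0:ℝ) ≤ ((d:ℕ) : ℝ) := Nat.cast_nonneg _
      have hDu : ((d:ℕ) : ℝ) ≤ x + 1 - r := by rw [hdcast]; linarith
      have hp1 : (0:ℝ) ≤ (x + 1 - r - ((d:ℕ):ℝ)) * ((x + 1 - r) + ((d:ℕ):ℝ) + 2 * (r + 1)) := by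
        apply mul_nonneg (by linarith) (by linarith)
      have hp2 : (0:ℝ) ≤ ((n:ℝ) - x) * (x + 3) :=
        mul_nonneg (by linarith) (by linarith)
      have hp3 : (0:ℝ) ≤ ((r:ℝ) - 2) * r := mul_nonneg (by linarith) (by linarith)
      nlinarith [hTR, hxsq, hxn, hnx, hrx, hr2, hx0, hp1, hp2, hp3]
    have hsqx : Real.sqrt ((2 ^ r : ℝ) * r) = x := by rw [hxdef, mul_comm]
    have h31 : (1 : ℝ) ≤ Real.sqrt ((2 ^ r : ℝ) / r) := by
      rw [show (1:ℝ) = Real.sqrt 1 by simp]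
      apply Real.sqrt_le_sqrt
      rw [le_div_iff₀ (by positivity)]
      have : (r : ℝ) ≤ 2 ^ r := by exact_mod_cast h2r.le
      linarith
    calc ((∑ A ∈ S, A.card : ℕ) : ℝ) ≤ (n : ℝ) * (x + 3) := key
      _ ≤ (n : ℝ) * (Real.sqrt ((2 ^ r : ℝ) * r) + 3 * Real.sqrt ((2 ^ r : ℝ) / r)) := by
          rw [hsqx]
          apply mul_le_mul_of_nonneg_left _ (le_of_lt hn0)
          linarith [h31]
end

section
/- Let l ≥ 1 be an integer and let S be a finite union-closed family of finite sets with |S| = m ≥ 2 such that (log₂ m)/2 ≥ l − 1. Then the l-fold weight satisfies w_l(S) = ∑_{A ∈ S} C(|A|, l) ≥ m · (1/l!) · ∏_{i=0}^{l−1} ( (log₂ m)/2 − i ), i.e., w_l(S) ≥ m times the generalized binomial coefficient C((log₂ m)/2, l). -/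
open Finset Real

namespace ReimerAux

variable {α : Type*} [DecidableEq α]

/-! ### Elementary real inequalities -/

lemma self_le_logb_one_add {t : ℝ} (h0 : 0 ≤ t) (h1 : t ≤ 1) :
    t ≤ Real.logb 2 (1 + t) := by
  have hexp : Real.exp ((1 - t) • (0:ℝ) + t • Real.log 2)
      ≤ (1 - t) • Real.exp 0 + t • Real.exp (Real.log 2) :=
    convexOn_exp.2 (Set.mem_univ _) (Set.mem_univ _) (by linarith) h0 (by ring)
  rw [Real.exp_log two_pos, Real.exp_zero] at hexp
  have hexp' : Real.exp (t * Real.log 2) ≤ 1 + t := by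
    calc Real.exp (t * Real.log 2)
        = Real.exp ((1 - t) • (0:ℝ) + t • Real.log 2) := by
          simp only [smul_eq_mul]; ring_nf
      _ ≤ (1 - t) • (1:ℝ) + t • (2:ℝ) := hexp
      _ = 1 + t := by simp only [smul_eq_mul]; ring
  have hlog : t * Real.log 2 ≤ Real.log (1 + t) := by
    have := Real.log_le_log (Real.exp_pos _) hexp'
    rwa [Real.log_exp] at this
  rw [Real.logb, le_div_iff₀ (Real.log_pos one_lt_two)]
  linarith

lemma entropy_lb {m0 m1 : ℝ} (h0 : 0 < m0) (h01 : m0 ≤ m1) :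
    2 * m0 + m0 * Real.logb 2 m0 + m1 * Real.logb 2 m1
      ≤ (m0 + m1) * Real.logb 2 (m0 + m1) := by
  have h1 : (0:ℝ) < m1 := lt_of_lt_of_le h0 h01
  have hm : (0:ℝ) < m0 + m1 := by linarith
  -- first piece : m0 * logb 2 ((m0+m1)/m0) ≥ m0
  have hA : m0 ≤ m0 * Real.logb 2 ((m0 + m1) / m0) := by
    have h2le : (2:ℝ) ≤ (m0 + m1) / m0 := by
      rw [le_div_iff₀ h0]; linarith
    have : Real.logb 2 2 ≤ Real.logb 2 ((m0 + m1) / m0) :=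
      Real.logb_le_logb_of_le one_lt_two two_pos h2le
    rw [Real.logb_self_eq_one one_lt_two] at this
    nlinarith
  -- second piece : m1 * logb 2 ((m0+m1)/m1) ≥ m0
  have hB : m0 ≤ m1 * Real.logb 2 ((m0 + m1) / m1) := by
    have ht0 : 0 ≤ m0 / m1 := le_of_lt (div_pos h0 h1)
    have ht1 : m0 / m1 ≤ 1 := (div_le_one h1).2 h01
    have := self_le_logb_one_add ht0 ht1
    have heq : 1 + m0 / m1 = (m0 + m1) / m1 := by field_simp; ring
    rw [heq] at this
    calc m0 = m1 * (m0 / m1) := by field_simp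
      _ ≤ m1 * Real.logb 2 ((m0 + m1) / m1) := by
          exact mul_le_mul_of_nonneg_left this (le_of_lt h1)
  have hd0 : Real.logb 2 ((m0 + m1) / m0) = Real.logb 2 (m0 + m1) - Real.logb 2 m0 :=
    Real.logb_div (ne_of_gt hm) (ne_of_gt h0)
  have hd1 : Real.logb 2 ((m0 + m1) / m1) = Real.logb 2 (m0 + m1) - Real.logb 2 m1 :=
    Real.logb_div (ne_of_gt hm) (ne_of_gt h1)
  rw [hd0] at hA
  rw [hd1] at hB
  nlinarith

/-! ### The up-set size lemma -/

lemma upset_sum_card (V : Finset α) :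
    ∀ U : Finset (Finset α), U.Nonempty → (∀ B ∈ U, B ⊆ V) →
      (∀ B ∈ U, ∀ y ∈ V, insert y B ∈ U) →
      (U.card : ℝ) * V.card - U.card * Real.logb 2 U.card / 2
        ≤ ∑ B ∈ U, (B.card : ℝ) := by
  classical
  induction V using Finset.induction_on with
  | empty =>
    intro U hne hsub _
    have hU : U = {∅} :=
      Finset.eq_singleton_iff_nonempty_unique_mem.2
        ⟨hne, fun B hB => Finset.subset_empty.1 (hsub B hB)⟩
    subst hU
    simp
  | @insert x V hx ih =>
    intro U hne hsub hcl
    have hyne : ∀ y ∈ V, y ≠ x := fun y hy => fun h => hx (h ▸ hy)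
    set U₀ := U.filter (fun B => x ∉ B) with hU₀
    set W := U.filter (fun B => x ∈ B) with hW
    set U₁ := W.image (fun B => B.erase x) with hU₁
    have hinj : Set.InjOn (fun B : Finset α => B.erase x) (W : Set (Finset α)) := by
      intro B hB C hC h
      have hxB : x ∈ B := (Finset.mem_filter.1 hB).2
      have hxC : x ∈ C := (Finset.mem_filter.1 hC).2
      rw [← Finset.insert_erase hxB, ← Finset.insert_erase hxC]
      exact congrArg (insert x) h
    have hcard1 : U₁.card = W.card := Finset.card_image_of_injOn hinj
    have hcardsplit : W.card + U₀.card = U.card := by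
      rw [hU₀, hW]
      exact Finset.card_filter_add_card_filter_not (fun B => x ∈ B)
    -- sum splitting
    have hsumsplit : ∑ B ∈ U, (B.card : ℝ)
        = ∑ B ∈ W, (B.card : ℝ) + ∑ B ∈ U₀, (B.card : ℝ) := by
      rw [hU₀, hW]
      exact (Finset.sum_filter_add_sum_filter_not U (fun B => x ∈ B) _).symm
    have hsumW : ∑ B ∈ W, (B.card : ℝ) = ∑ B ∈ U₁, ((B.card : ℝ) + 1) := by
      rw [hU₁, Finset.sum_image (fun B hB C hC h => hinj hB hC h)]
      apply Finset.sum_congr rfl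
      intro B hB
      have hxB : x ∈ B := (Finset.mem_filter.1 hB).2
      have h1 : 1 ≤ B.card := Finset.card_pos.2 ⟨x, hxB⟩
      rw [Finset.card_erase_of_mem hxB]
      push_cast [Nat.cast_sub h1]
      ring
    -- properties of U₁
    have hWne : W.Nonempty := by
      obtain ⟨B, hB⟩ := hne
      exact ⟨insert x B, Finset.mem_filter.2
        ⟨hcl B hB x (Finset.mem_insert_self x V), Finset.mem_insert_self x B⟩⟩
    have hU₁ne : U₁.Nonempty := hWne.image _
    have hsub₁ : ∀ B ∈ U₁, B ⊆ V := by
      intro B hB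
      obtain ⟨C, hC, rfl⟩ := Finset.mem_image.1 hB
      intro a ha
      have haC := Finset.mem_of_mem_erase ha
      have hax := Finset.ne_of_mem_erase ha
      have := hsub C (Finset.mem_filter.1 hC).1 haC
      rcases Finset.mem_insert.1 this with h | h
      · exact absurd h hax
      · exact h
    have hcl₁ : ∀ B ∈ U₁, ∀ y ∈ V, insert y B ∈ U₁ := by
      intro B hB y hy
      obtain ⟨C, hC, rfl⟩ := Finset.mem_image.1 hB
      have hCU := (Finset.mem_filter.1 hC).1
      have hxC := (Finset.mem_filter.1 hC).2
      have h1 : insert y C ∈ U := hcl C hCU y (Finset.mem_insert_of_mem hy)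
      have h2 : insert y C ∈ W := Finset.mem_filter.2 ⟨h1, Finset.mem_insert_of_mem hxC⟩
      refine Finset.mem_image.2 ⟨insert y C, h2, ?_⟩
      exact Finset.erase_insert_of_ne (hyne y hy)
    have hsub₀ : ∀ B ∈ U₀, B ⊆ V := by
      intro B hB a ha
      have hBU := (Finset.mem_filter.1 hB).1
      have hxB := (Finset.mem_filter.1 hB).2
      rcases Finset.mem_insert.1 (hsub B hBU ha) with h | h
      · exact absurd (h ▸ ha) hxB
      · exact h
    have hcl₀ : ∀ B ∈ U₀, ∀ y ∈ V, insert y B ∈ U₀ := by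
      intro B hB y hy
      have hBU := (Finset.mem_filter.1 hB).1
      have hxB := (Finset.mem_filter.1 hB).2
      refine Finset.mem_filter.2 ⟨hcl B hBU y (Finset.mem_insert_of_mem hy), ?_⟩
      intro hmem
      rcases Finset.mem_insert.1 hmem with h | h
      · exact hyne y hy h.symm
      · exact hxB h
    have hsub01 : U₀ ⊆ U₁ := by
      intro B hB
      have hBU := (Finset.mem_filter.1 hB).1
      have hxB := (Finset.mem_filter.1 hB).2
      have h1 : insert x B ∈ U := hcl B hBU x (Finset.mem_insert_self x V)
      have h2 : insert x B ∈ W := Finset.mem_filter.2 ⟨h1, Finset.mem_insert_self x B⟩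
      exact Finset.mem_image.2 ⟨insert x B, h2, Finset.erase_insert hxB⟩
    have hm01 : U₀.card ≤ U₁.card := Finset.card_le_card hsub01
    have hm1pos : (1:ℝ) ≤ (U₁.card : ℝ) := by
      exact_mod_cast Finset.card_pos.2 hU₁ne
    have ihU₁ := ih U₁ hU₁ne hsub₁ hcl₁
    have hVcard : ((insert x V).card : ℝ) = (V.card : ℝ) + 1 := by
      rw [Finset.card_insert_of_notMem hx]; push_cast; ring
    have hUcard : (U.card : ℝ) = (U₁.card : ℝ) + (U₀.card : ℝ) := by
      rw [← hcardsplit, ← hcard1]; push_cast; ring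
    have hsum1 : ∑ B ∈ U₁, ((B.card : ℝ) + 1)
        = ∑ B ∈ U₁, (B.card : ℝ) + (U₁.card : ℝ) := by
      rw [Finset.sum_add_distrib, Finset.sum_const, nsmul_eq_mul, mul_one]
    rcases Finset.eq_empty_or_nonempty U₀ with h0 | h0
    · -- U₀ empty
      have hU0card : (U₀.card : ℝ) = 0 := by rw [h0]; simp
      have hU0sum : ∑ B ∈ U₀, (B.card : ℝ) = 0 := by rw [h0]; simp
      rw [hsumsplit, hsumW, hsum1, hU0sum, hVcard]
      rw [hUcard, hU0card]
      simp only [add_zero]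
      linarith
    · have ihU₀ := ih U₀ h0 hsub₀ hcl₀
      have hm0pos : (0:ℝ) < (U₀.card : ℝ) := by
        exact_mod_cast Finset.card_pos.2 h0
      have hm01' : ((U₀.card : ℝ)) ≤ ((U₁.card : ℝ)) := by exact_mod_cast hm01
      have hent' : 2 * (U₀.card:ℝ) + (U₀.card:ℝ) * Real.logb 2 (U₀.card:ℝ)
            + (U₁.card:ℝ) * Real.logb 2 (U₁.card:ℝ)
          ≤ ((U₁.card:ℝ) + (U₀.card:ℝ)) * Real.logb 2 ((U₁.card:ℝ) + (U₀.card:ℝ)) := by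
        have h := entropy_lb hm0pos hm01'
        have hc : (U₀.card:ℝ) + (U₁.card:ℝ) = (U₁.card:ℝ) + (U₀.card:ℝ) := by ring
        rwa [hc] at h
      rw [hsumsplit, hsumW, hsum1, hVcard, hUcard]
      linarith [hent', ihU₀, ihU₁]

/-! ### The compression machinery -/

variable (S : Finset (Finset α))

/-- One compression step at coordinate `x`. -/
def stepf (φ : Finset α → Finset α) (x : α) : Finset α → Finset α :=
  fun A => if insert x (φ A) ∈ S.image φ then φ A else insert x (φ A)

/-- The invariants maintained by the compression process. -/
structure Inv (P : Finset α) (φ : Finset α → Finset α) : Prop where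
  sub : ∀ A ∈ S, A ⊆ φ A
  add : ∀ A ∈ S, φ A ⊆ A ∪ P
  nprop : ∀ A ∈ S, ∀ B ∈ S, φ A ∪ B ∈ S.image φ
  vprop : ∀ y ∈ P, ∀ C ∈ S.image φ, insert y C ∈ S.image φ
  disj : ∀ A ∈ S, ∀ B ∈ S, ∀ D : Finset α,
    A ⊆ D → D ⊆ φ A → B ⊆ D → D ⊆ φ B → A = B

variable {S}

lemma Inv.injOn {P : Finset α} {φ : Finset α → Finset α} (h : Inv S P φ) :
    Set.InjOn φ S := by
  intro A hA B hB hAB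
  have hBA : B ⊆ φ A := by rw [hAB]; exact h.sub B hB
  exact h.disj A hA B hB (φ A) (h.sub A hA) subset_rfl hBA (le_of_eq hAB)

lemma inv_init (huc : ∀ A ∈ S, ∀ B ∈ S, A ∪ B ∈ S) : Inv S ∅ id := by
  constructor
  · intro A _; exact subset_rfl
  · intro A _; simp
  · intro A hA B hB; rw [Finset.image_id]; exact huc A hA B hB
  · intro y hy; exact absurd hy (Finset.notMem_empty y)
  · intro A hA B hB D h1 h2 h3 h4
    have e1 : D = A := Finset.Subset.antisymm h2 h1
    have e2 : D = B := Finset.Subset.antisymm h4 h3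
    rw [← e1, e2]

lemma inv_step {P : Finset α} {φ : Finset α → Finset α} (h : Inv S P φ)
    {x : α} (hx : x ∉ P) : Inv S (insert x P) (stepf S φ x) := by
  classical
  set φ' := stepf S φ x with hφ'
  have hstep : ∀ A, φ' A
      = if insert x (φ A) ∈ S.image φ then φ A else insert x (φ A) := fun A => rfl
  have hkeep : ∀ A, insert x (φ A) ∈ S.image φ → φ' A = φ A := by
    intro A hA; rw [hstep, if_pos hA]
  have hpush : ∀ A, insert x (φ A) ∉ S.image φ → φ' A = insert x (φ A) := by
    intro A hA; rw [hstep, if_neg hA]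
  have hmemG' : ∀ A ∈ S, φ' A ∈ S.image φ' :=
    fun A hA => Finset.mem_image_of_mem φ' hA
  have h2 : ∀ C, insert x C ∈ S.image φ → insert x C ∈ S.image φ' := by
    intro C hins
    obtain ⟨A₀, hA₀S, hA₀⟩ := Finset.mem_image.1 hins
    have heq : insert x (φ A₀) = φ A₀ := by rw [hA₀, Finset.insert_idem]
    have hkept := hkeep A₀ (by rw [heq]; exact Finset.mem_image_of_mem φ hA₀S)
    rw [← hA₀, ← hkept]; exact hmemG' A₀ hA₀S
  have h3 : ∀ A ∈ S, insert x (φ A) ∈ S.image φ' := by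
    intro A hA
    by_cases hc : insert x (φ A) ∈ S.image φ
    · exact h2 (φ A) hc
    · rw [← hpush A hc]; exact hmemG' A hA
  have hφ'sub : ∀ A, φ' A ⊆ insert x (φ A) := by
    intro A; rw [hstep]
    split
    · exact Finset.subset_insert x (φ A)
    · exact subset_rfl
  have hφsub' : ∀ A, φ A ⊆ φ' A := by
    intro A; rw [hstep]
    split
    · exact subset_rfl
    · exact Finset.subset_insert x (φ A)
  constructor
  · -- sub
    intro A hA; exact (h.sub A hA).trans (hφsub' A)
  · -- add
    intro A hA
    refine (hφ'sub A).trans ?_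
    intro a ha
    rcases Finset.mem_insert.1 ha with rfl | ha'
    · exact Finset.mem_union_right _ (Finset.mem_insert_self a P)
    · rcases Finset.mem_union.1 (h.add A hA ha') with h' | h'
      · exact Finset.mem_union_left _ h'
      · exact Finset.mem_union_right _ (Finset.mem_insert_of_mem h')
  · -- nprop
    intro A hA B hB
    obtain ⟨A₀, hA₀S, hA₀⟩ := Finset.mem_image.1 (h.nprop A hA B hB)
    by_cases hc : insert x (φ A) ∈ S.image φ
    · rw [hkeep A hc]
      obtain ⟨C₀, hC₀S, hC₀⟩ := Finset.mem_image.1 hc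
      have hins : insert x (φ A₀) ∈ S.image φ := by
        rw [hA₀, ← Finset.insert_union, ← hC₀]
        exact h.nprop C₀ hC₀S B hB
      rw [← hA₀, ← hkeep A₀ hins]
      exact hmemG' A₀ hA₀S
    · rw [hpush A hc, Finset.insert_union, ← hA₀]
      exact h3 A₀ hA₀S
  · -- vprop
    intro y hy C hC
    obtain ⟨A, hAS, rfl⟩ := Finset.mem_image.1 hC
    rcases Finset.mem_insert.1 hy with rfl | hyP
    · by_cases hc : insert y (φ A) ∈ S.image φ
      · rw [hkeep A hc]
        exact h3 A hAS
      · rw [hpush A hc, Finset.insert_idem, ← hpush A hc]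
        exact hmemG' A hAS
    · by_cases hc : insert x (φ A) ∈ S.image φ
      · rw [hkeep A hc]
        have hW : insert y (φ A) ∈ S.image φ :=
          h.vprop y hyP (φ A) (Finset.mem_image_of_mem φ hAS)
        obtain ⟨A₀, hA₀S, hA₀⟩ := Finset.mem_image.1 hW
        have hkept : insert x (φ A₀) ∈ S.image φ := by
          rw [hA₀, Finset.insert_comm]
          exact h.vprop y hyP _ hc
        rw [← hA₀, ← hkeep A₀ hkept]
        exact hmemG' A₀ hA₀S
      · rw [hpush A hc, Finset.insert_comm]
        have hW : insert y (φ A) ∈ S.image φ :=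
          h.vprop y hyP (φ A) (Finset.mem_image_of_mem φ hAS)
        obtain ⟨A₀, hA₀S, hA₀⟩ := Finset.mem_image.1 hW
        rw [← hA₀]
        exact h3 A₀ hA₀S
  · -- disj
    intro A hA B hB D h1 h2' h3' h4'
    by_cases hxD : x ∈ D
    · by_cases hcA : insert x (φ A) ∈ S.image φ <;>
        by_cases hcB : insert x (φ B) ∈ S.image φ
      · -- both kept
        rw [hkeep A hcA] at h2'; rw [hkeep B hcB] at h4'
        exact h.disj A hA B hB D h1 h2' h3' h4'
      · -- A kept, B pushed : contradiction with hcB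
        exfalso
        rw [hkeep A hcA] at h2'
        have hxA : x ∈ A := by
          rcases Finset.mem_union.1 (h.add A hA (h2' hxD)) with h' | h'
          · exact h'
          · exact absurd h' hx
        have hBD' : insert x (φ B) = φ B ∪ A := by
          apply Finset.Subset.antisymm
          · intro a ha
            rcases Finset.mem_insert.1 ha with rfl | h'
            · exact Finset.mem_union_right _ hxA
            · exact Finset.mem_union_left _ h'
          · refine Finset.union_subset (Finset.subset_insert x (φ B)) ?_
            exact fun a ha => hφ'sub B (h4' (h1 ha))
        exact hcB (hBD' ▸ h.nprop B hB A hA)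
      · -- A pushed, B kept : symmetric
        exfalso
        rw [hkeep B hcB] at h4'
        have hxB : x ∈ B := by
          rcases Finset.mem_union.1 (h.add B hB (h4' hxD)) with h' | h'
          · exact h'
          · exact absurd h' hx
        have hAD' : insert x (φ A) = φ A ∪ B := by
          apply Finset.Subset.antisymm
          · intro a ha
            rcases Finset.mem_insert.1 ha with rfl | h'
            · exact Finset.mem_union_right _ hxB
            · exact Finset.mem_union_left _ h'
          · refine Finset.union_subset (Finset.subset_insert x (φ A)) ?_
            exact fun a ha => hφ'sub A (h2' (h3' ha))
        exact hcA (hAD' ▸ h.nprop A hA B hB)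
      · -- both pushed
        have hxφA : x ∉ φ A := fun hmem =>
          hcA (by rw [Finset.insert_eq_self.2 hmem]; exact Finset.mem_image_of_mem φ hA)
        have hxφB : x ∉ φ B := fun hmem =>
          hcB (by rw [Finset.insert_eq_self.2 hmem]; exact Finset.mem_image_of_mem φ hB)
        have h1' : A ⊆ D.erase x := by
          intro a ha
          refine Finset.mem_erase.2 ⟨?_, h1 ha⟩
          intro he
          exact hxφA (he ▸ (h.sub A hA ha))
        have h3'' : B ⊆ D.erase x := by
          intro a ha
          refine Finset.mem_erase.2 ⟨?_, h3' ha⟩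
          intro he
          exact hxφB (he ▸ (h.sub B hB ha))
        have hDA : D.erase x ⊆ φ A := by
          intro a ha
          rcases Finset.mem_insert.1 (hφ'sub A (h2' (Finset.mem_of_mem_erase ha))) with h' | h'
          · exact absurd h' (Finset.ne_of_mem_erase ha)
          · exact h'
        have hDB : D.erase x ⊆ φ B := by
          intro a ha
          rcases Finset.mem_insert.1 (hφ'sub B (h4' (Finset.mem_of_mem_erase ha))) with h' | h'
          · exact absurd h' (Finset.ne_of_mem_erase ha)
          · exact h'
        exact h.disj A hA B hB (D.erase x) h1' hDA h3'' hDB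
    · -- x ∉ D
      have hDA : D ⊆ φ A := by
        intro a ha
        rcases Finset.mem_insert.1 (hφ'sub A (h2' ha)) with rfl | h'
        · exact absurd ha hxD
        · exact h'
      have hDB : D ⊆ φ B := by
        intro a ha
        rcases Finset.mem_insert.1 (hφ'sub B (h4' ha)) with rfl | h'
        · exact absurd ha hxD
        · exact h'
      exact h.disj A hA B hB D h1 hDA h3' hDB

lemma inv_exists (huc : ∀ A ∈ S, ∀ B ∈ S, A ∪ B ∈ S) (V : Finset α) :
    ∃ φ, Inv S V φ := by
  classical
  induction V using Finset.induction_on with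
  | empty => exact ⟨id, inv_init huc⟩
  | @insert x V hx ih =>
    obtain ⟨φ, hφ⟩ := ih
    exact ⟨stepf S φ x, inv_step hφ hx⟩

/-! ### Cube counting -/

lemma cube_count {V : Finset α} {φ : Finset α → Finset α}
    (hV : ∀ A ∈ S, A ⊆ V) (h : Inv S V φ) :
    ∑ A ∈ S, 2 ^ ((φ A \ A).card) ≤ 2 ^ V.card := by
  classical
  have hφV : ∀ A ∈ S, φ A ⊆ V := by
    intro A hA
    exact (h.add A hA).trans (Finset.union_subset (hV A hA) subset_rfl)
  have hmap : ∀ p ∈ S.sigma (fun A => (φ A \ A).powerset),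
      (p.1 ∪ p.2 : Finset α) ∈ V.powerset := by
    intro p hp
    obtain ⟨hp1, hp2⟩ := Finset.mem_sigma.1 hp
    refine Finset.mem_powerset.2 (Finset.union_subset (hV p.1 hp1) ?_)
    exact ((Finset.mem_powerset.1 hp2).trans (Finset.sdiff_subset)).trans (hφV p.1 hp1)
  have hinj : Set.InjOn (fun p : (_ : Finset α) × Finset α => p.1 ∪ p.2)
      ((S.sigma (fun A => (φ A \ A).powerset)) : Set ((_ : Finset α) × Finset α)) := by
    rintro ⟨A, T⟩ hp ⟨B, T'⟩ hq heq
    simp only [Finset.coe_sigma, Set.mem_sigma_iff, Finset.mem_coe] at hp hq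
    have hpT := Finset.mem_powerset.1 hp.2
    have hqT := Finset.mem_powerset.1 hq.2
    simp only at heq
    have hDp : A ∪ T ⊆ φ A :=
      Finset.union_subset (h.sub A hp.1) (hpT.trans Finset.sdiff_subset)
    have hDq : B ∪ T' ⊆ φ B :=
      Finset.union_subset (h.sub B hq.1) (hqT.trans Finset.sdiff_subset)
    have hBsub : B ⊆ A ∪ T := by rw [heq]; exact Finset.subset_union_left
    have hDq' : A ∪ T ⊆ φ B := by rw [heq]; exact hDq
    have hAB : A = B :=
      h.disj A hp.1 B hq.1 (A ∪ T) Finset.subset_union_left hDp hBsub hDq'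
    subst hAB
    have hTT : T = T' := by
      ext a
      constructor
      · intro ha
        have haA : a ∉ A := (Finset.mem_sdiff.1 (hpT ha)).2
        have : a ∈ A ∪ T' := heq ▸ (Finset.mem_union_right A ha)
        exact (Finset.mem_union.1 this).resolve_left haA
      · intro ha
        have haA : a ∉ A := (Finset.mem_sdiff.1 (hqT ha)).2
        have : a ∈ A ∪ T := heq ▸ (Finset.mem_union_right A ha)
        exact (Finset.mem_union.1 this).resolve_left haA
    rw [hTT]
  have hcard := Finset.card_le_card_of_injOn _ hmap hinj
  rw [Finset.card_sigma, Finset.card_powerset] at hcard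
  simp only [Finset.card_powerset] at hcard
  exact hcard

/-- Jensen for the concave logarithm. -/
lemma sum_le_of_sum_pow_le {ι : Type*} {t : Finset ι} (d : ι → ℕ) {n : ℕ}
    (ht : t.Nonempty) (h : ∑ i ∈ t, (2:ℝ) ^ (d i) ≤ 2 ^ n) :
    ∑ i ∈ t, (d i : ℝ) ≤ t.card * n - t.card * Real.logb 2 t.card := by
  classical
  have hm : (0:ℝ) < (t.card : ℝ) := by exact_mod_cast Finset.card_pos.2 ht
  have hm' : (t.card : ℝ) ≠ 0 := ne_of_gt hm
  have hL2 : (0:ℝ) < Real.log 2 := Real.log_pos one_lt_two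
  have hconc : ConcaveOn ℝ (Set.Ioi 0) Real.log := strictConcaveOn_log_Ioi.concaveOn
  have hjen := hconc.le_map_sum (t := t) (w := fun _ => 1/(t.card:ℝ))
      (p := fun i => (2:ℝ)^(d i)) (fun i _ => by positivity)
      (by rw [Finset.sum_const, nsmul_eq_mul]; field_simp)
      (fun i _ => Set.mem_Ioi.2 (by positivity))
  simp only [smul_eq_mul] at hjen
  have hlogeq : ∀ i, Real.log ((2:ℝ)^(d i)) = (d i : ℝ) * Real.log 2 :=
    fun i => Real.log_pow (n := d i) (x := 2)
  have hjen2 : ∑ i ∈ t, 1/(t.card:ℝ) * ((d i:ℝ) * Real.log 2)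
      ≤ Real.log (∑ i ∈ t, 1/(t.card:ℝ) * (2:ℝ)^(d i)) := by
    calc ∑ i ∈ t, 1/(t.card:ℝ) * ((d i:ℝ) * Real.log 2)
        = ∑ i ∈ t, 1/(t.card:ℝ) * Real.log ((2:ℝ)^(d i)) := by
          exact Finset.sum_congr rfl (fun i _ => by rw [hlogeq i])
      _ ≤ _ := hjen
  have hsum_le : ∑ i ∈ t, 1/(t.card:ℝ) * (2:ℝ)^(d i) ≤ 2^n / (t.card:ℝ) := by
    rw [← Finset.mul_sum]
    have h6 := mul_le_mul_of_nonneg_left h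
      (by positivity : (0:ℝ) ≤ 1/(t.card:ℝ))
    calc 1/(t.card:ℝ) * ∑ i ∈ t, (2:ℝ)^(d i) ≤ 1/(t.card:ℝ) * 2^n := h6
      _ = 2^n / (t.card:ℝ) := by ring
  have hpos : (0:ℝ) < ∑ i ∈ t, 1/(t.card:ℝ) * (2:ℝ)^(d i) :=
    Finset.sum_pos (fun i _ => by positivity) ht
  have hlog2 : Real.log (∑ i ∈ t, 1/(t.card:ℝ) * (2:ℝ)^(d i))
      ≤ Real.log ((2:ℝ)^n / (t.card:ℝ)) := Real.log_le_log hpos hsum_le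
  have hrhs : Real.log ((2:ℝ)^n / (t.card:ℝ)) = n * Real.log 2 - Real.log (t.card:ℝ) := by
    rw [Real.log_div (by positivity) hm', Real.log_pow]
  have hfinal : 1/(t.card:ℝ) * Real.log 2 * (∑ i ∈ t, (d i:ℝ))
      ≤ n * Real.log 2 - Real.log (t.card:ℝ) := by
    calc 1/(t.card:ℝ) * Real.log 2 * (∑ i ∈ t, (d i:ℝ))
        = ∑ i ∈ t, 1/(t.card:ℝ) * ((d i:ℝ) * Real.log 2) := by
          rw [Finset.mul_sum]
          exact Finset.sum_congr rfl (fun i _ => by ring)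
      _ ≤ Real.log (∑ i ∈ t, 1/(t.card:ℝ) * (2:ℝ)^(d i)) := hjen2
      _ ≤ Real.log ((2:ℝ)^n / (t.card:ℝ)) := hlog2
      _ = _ := hrhs
  have hstep2 : Real.log 2 * (∑ i ∈ t, (d i : ℝ))
      ≤ (t.card:ℝ) * (n * Real.log 2 - Real.log (t.card:ℝ)) := by
    have h5 := mul_le_mul_of_nonneg_left hfinal hm.le
    calc Real.log 2 * ∑ i ∈ t, (d i:ℝ)
        = (t.card:ℝ) * (1/(t.card:ℝ) * Real.log 2 * (∑ i ∈ t, (d i:ℝ))) := by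
          field_simp
      _ ≤ _ := h5
  rw [Real.logb]
  have hgoal : ∑ i ∈ t, (d i:ℝ)
      ≤ ((t.card:ℝ) * (n * Real.log 2 - Real.log (t.card:ℝ))) / Real.log 2 := by
    rw [le_div_iff₀ hL2]
    linarith [hstep2]
  calc ∑ i ∈ t, (d i:ℝ) ≤ _ := hgoal
    _ = (t.card:ℝ) * n - (t.card:ℝ) * (Real.log (t.card:ℝ) / Real.log 2) := by
        field_simp

/-! ### Reimer's average set size theorem -/

theorem reimer (hS : S.Nonempty) (huc : ∀ A ∈ S, ∀ B ∈ S, A ∪ B ∈ S) :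
    (S.card : ℝ) * Real.logb 2 S.card / 2 ≤ ∑ A ∈ S, (A.card : ℝ) := by
  classical
  set V := S.sup id with hV
  have hsubV : ∀ A ∈ S, A ⊆ V := fun A hA => Finset.le_sup (f := id) hA
  obtain ⟨φ, hφ⟩ := inv_exists huc V
  have hinj := hφ.injOn
  have hcardU : (S.image φ).card = S.card := Finset.card_image_of_injOn hinj
  have hUsub : ∀ B ∈ S.image φ, B ⊆ V := by
    intro B hB
    obtain ⟨A, hA, rfl⟩ := Finset.mem_image.1 hB
    exact (hφ.add A hA).trans (Finset.union_subset (hsubV A hA) subset_rfl)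
  have hUcl : ∀ B ∈ S.image φ, ∀ y ∈ V, insert y B ∈ S.image φ :=
    fun B hB y hy => hφ.vprop y hy B hB
  have hUne : (S.image φ).Nonempty := hS.image φ
  have hupper := upset_sum_card V (S.image φ) hUne hUsub hUcl
  rw [hcardU] at hupper
  have hsumU : ∑ B ∈ S.image φ, (B.card : ℝ) = ∑ A ∈ S, ((φ A).card : ℝ) :=
    Finset.sum_image (fun A hA B hB hAB => hinj hA hB hAB)
  rw [hsumU] at hupper
  have hsplit : ∀ A ∈ S, ((φ A).card : ℝ) = (A.card : ℝ) + ((φ A \ A).card : ℝ) := by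
    intro A hA
    have h1 := Finset.card_sdiff_add_card_eq_card (hφ.sub A hA)
    have h2 : (φ A).card = A.card + (φ A \ A).card := by omega
    exact_mod_cast congrArg (Nat.cast : ℕ → ℝ) h2
  have hsplitsum : ∑ A ∈ S, ((φ A).card : ℝ)
      = ∑ A ∈ S, (A.card : ℝ) + ∑ A ∈ S, ((φ A \ A).card : ℝ) := by
    rw [← Finset.sum_add_distrib]
    exact Finset.sum_congr rfl hsplit
  have hcube := cube_count hsubV hφ
  have hcubeR : ∑ A ∈ S, (2:ℝ)^((φ A \ A).card) ≤ 2 ^ V.card := by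
    calc ∑ A ∈ S, (2:ℝ)^((φ A \ A).card)
        = ((∑ A ∈ S, 2^((φ A \ A).card) : ℕ) : ℝ) := by push_cast; rfl
      _ ≤ ((2^V.card : ℕ) : ℝ) := by exact_mod_cast hcube
      _ = (2:ℝ)^V.card := by push_cast; rfl
  have hd := sum_le_of_sum_pow_le (fun A => (φ A \ A).card) hS hcubeR
  rw [hsplitsum] at hupper
  linarith [hupper, hd]

/-! ### Convexity of the generalized binomial coefficient -/

lemma prod_poly_facts (l : ℕ) :
    MonotoneOn (fun x : ℝ => ∏ i ∈ range l, (x - i)) (Set.Ici ((l:ℝ) - 1)) ∧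
    (∀ x ∈ Set.Ici ((l:ℝ) - 1), 0 ≤ ∏ i ∈ range l, (x - (i:ℝ))) ∧
    ConvexOn ℝ (Set.Ici ((l:ℝ) - 1)) (fun x : ℝ => ∏ i ∈ range l, (x - i)) := by
  induction l with
  | zero =>
    refine ⟨?_, ?_, ?_⟩
    · intro a _ b _ _
      simp
    · intro x _
      simp
    · have : (fun x : ℝ => ∏ i ∈ range 0, (x - (i:ℝ))) = fun _ : ℝ => (1:ℝ) := by
        funext x; simp
      rw [this]
      exact convexOn_const 1 (convex_Ici _)
  | succ l ih =>
    obtain ⟨hmono, hnn, hconv⟩ := ih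
    have hc : ((l+1:ℕ):ℝ) - 1 = (l:ℝ) := by push_cast; ring
    rw [hc]
    have hsub : Set.Ici ((l:ℝ)) ⊆ Set.Ici ((l:ℝ) - 1) := Set.Ici_subset_Ici.2 (by linarith)
    have hfun : (fun x:ℝ => ∏ i ∈ range (l+1), (x - (i:ℝ)))
        = fun x:ℝ => (∏ i ∈ range l, (x - (i:ℝ))) * (x - (l:ℝ)) := by
      funext x; rw [Finset.prod_range_succ]
    rw [hfun]
    have hmono' : MonotoneOn (fun x:ℝ => ∏ i ∈ range l, (x - (i:ℝ))) (Set.Ici (l:ℝ)) :=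
      hmono.mono hsub
    have hnn' : ∀ x ∈ Set.Ici (l:ℝ), 0 ≤ ∏ i ∈ range l, (x - (i:ℝ)) :=
      fun x hx => hnn x (hsub hx)
    have hconv' : ConvexOn ℝ (Set.Ici (l:ℝ)) (fun x:ℝ => ∏ i ∈ range l, (x - (i:ℝ))) :=
      hconv.subset hsub (convex_Ici _)
    have hgmono : MonotoneOn (fun x:ℝ => x - (l:ℝ)) (Set.Ici (l:ℝ)) :=
      fun a _ b _ hab => sub_le_sub_right hab _
    have hgnn : ∀ x ∈ Set.Ici (l:ℝ), 0 ≤ x - (l:ℝ) := by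
      intro x hx
      have := Set.mem_Ici.1 hx
      linarith
    have hgconv : ConvexOn ℝ (Set.Ici (l:ℝ)) (fun x:ℝ => x - (l:ℝ)) := by
      refine ⟨convex_Ici _, ?_⟩
      intro x _ y _ a b _ _ hab
      simp only [smul_eq_mul]
      exact le_of_eq (by linear_combination ((l:ℝ)) * hab)
    refine ⟨?_, ?_, ?_⟩
    · intro a ha b hb hab
      exact mul_le_mul (hmono' ha hb hab) (sub_le_sub_right hab _) (hgnn a ha) (hnn' b hb)
    · intro x hx
      rw [Finset.prod_range_succ]
      exact mul_nonneg (hnn' x hx) (hgnn x hx)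
    · have := ConvexOn.mul hconv' hgconv hnn' hgnn (hmono'.monovaryOn hgmono)
      exact this

/-- the clamped product polynomial -/
noncomputable def Qm (l : ℕ) (x : ℝ) : ℝ := ∏ i ∈ range l, (max x ((l:ℝ) - 1) - i)

lemma Qm_monotone (l : ℕ) : Monotone (Qm l) := by
  obtain ⟨hmono, -, -⟩ := prod_poly_facts l
  intro x y hxy
  exact hmono (Set.mem_Ici.2 (le_max_right _ _)) (Set.mem_Ici.2 (le_max_right _ _))
    (max_le_max hxy le_rfl)

lemma Qm_convex (l : ℕ) : ConvexOn ℝ Set.univ (Qm l) := by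
  obtain ⟨hmono, -, hconv⟩ := prod_poly_facts l
  refine ⟨convex_univ, ?_⟩
  intro x _ y _ a b ha hb hab
  set c := (l:ℝ) - 1 with hcdef
  simp only [smul_eq_mul]
  have h1 : max (a * x + b * y) c ≤ a * max x c + b * max y c := by
    apply max_le
    · apply add_le_add
      · exact mul_le_mul_of_nonneg_left (le_max_left _ _) ha
      · exact mul_le_mul_of_nonneg_left (le_max_left _ _) hb
    · calc c = a * c + b * c := by linear_combination (-(c:ℝ)) * hab
        _ ≤ a * max x c + b * max y c := by
            apply add_le_add
            · exact mul_le_mul_of_nonneg_left (le_max_right _ _) ha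
            · exact mul_le_mul_of_nonneg_left (le_max_right _ _) hb
  have hm1 : max x c ∈ Set.Ici c := Set.mem_Ici.2 (le_max_right _ _)
  have hm2 : max y c ∈ Set.Ici c := Set.mem_Ici.2 (le_max_right _ _)
  have hmix : a * max x c + b * max y c ∈ Set.Ici c := by
    refine Set.mem_Ici.2 ?_
    calc c = a * c + b * c := by linear_combination (-(c:ℝ)) * hab
      _ ≤ a * max x c + b * max y c := by
          apply add_le_add
          · exact mul_le_mul_of_nonneg_left (le_max_right _ _) ha
          · exact mul_le_mul_of_nonneg_left (le_max_right _ _) hb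
  have hmidmem : max (a * x + b * y) c ∈ Set.Ici c := Set.mem_Ici.2 (le_max_right _ _)
  have step1 : Qm l (a * x + b * y)
      ≤ ∏ i ∈ range l, ((a * max x c + b * max y c) - (i:ℝ)) :=
    hmono hmidmem hmix h1
  have step2 : ∏ i ∈ range l, ((a * max x c + b * max y c) - (i:ℝ))
      ≤ a * Qm l x + b * Qm l y := by
    have := hconv.2 hm1 hm2 ha hb hab
    simp only [smul_eq_mul] at this
    exact this
  exact step1.trans step2

lemma desc_prod (l k : ℕ) (h : l ≤ k) :
    ∏ i ∈ range l, ((k:ℝ) - i) = (k.choose l : ℝ) * (Nat.factorial l : ℝ) := by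
  induction l with
  | zero => simp
  | succ l ih =>
    have hlk : l ≤ k := le_trans (Nat.le_succ l) h
    have hid := Nat.choose_succ_right_eq k l
    have h1 : ((k - l : ℕ):ℝ) = (k:ℝ) - l := by
      push_cast [Nat.cast_sub hlk]; ring
    have hidR : (k.choose (l+1) : ℝ) * ((l:ℝ)+1) = (k.choose l : ℝ) * ((k:ℝ) - (l:ℝ)) := by
      have := congrArg (Nat.cast : ℕ → ℝ) hid
      push_cast at this
      rw [h1] at this
      exact this
    rw [Finset.prod_range_succ, ih hlk, Nat.factorial_succ]
    push_cast
    linear_combination (-(Nat.factorial l : ℝ)) * hidR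

lemma Qm_natCast (l : ℕ) (hl : 1 ≤ l) (k : ℕ) :
    Qm l (k : ℝ) = (k.choose l : ℝ) * (Nat.factorial l : ℝ) := by
  rcases lt_or_ge k l with hkl | hlk
  · have hk1 : (k:ℝ) + 1 ≤ (l:ℝ) := by exact_mod_cast hkl
    have hmax : max (k:ℝ) ((l:ℝ)-1) = (l:ℝ)-1 := max_eq_right (by linarith)
    unfold Qm
    rw [hmax, Nat.choose_eq_zero_of_lt hkl]
    rw [Nat.cast_zero, zero_mul]
    apply Finset.prod_eq_zero (Finset.mem_range.2 (by omega : l - 1 < l))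
    have hcast : ((l-1:ℕ):ℝ) = (l:ℝ) - 1 := by
      push_cast [Nat.cast_sub hl]; ring
    rw [hcast]
    ring
  · have hlk' : (l:ℝ) - 1 ≤ (k:ℝ) := by
      have : (l:ℝ) ≤ (k:ℝ) := by exact_mod_cast hlk
      linarith
    have hmax : max (k:ℝ) ((l:ℝ)-1) = (k:ℝ) := max_eq_left hlk'
    unfold Qm
    rw [hmax]
    exact desc_prod l k hlk

end ReimerAux

/-- `l`-fold weight version of Reimer's theorem: for a union-closed family `S`
with `|S| = m ≥ 2` and `(log₂ m)/2 ≥ l - 1`, we have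
`∑_{A ∈ S} C(|A|, l) ≥ m · C((log₂ m)/2, l)`, where the generalized binomial
coefficient is `C(x, l) = x(x-1)⋯(x-l+1)/l!`. -/
theorem unionClosed_lfold_weight_bound {α : Type*} [DecidableEq α]
    (l : ℕ) (hl : 1 ≤ l) (S : Finset (Finset α)) (m : ℕ)
    (hm : S.card = m) (hm2 : 2 ≤ m)
    (hlog : ((l : ℝ) - 1) ≤ Real.logb 2 m / 2)
    (huc : ∀ A ∈ S, ∀ B ∈ S, A ∪ B ∈ S) :
    (m : ℝ) * ((1 : ℝ) / (Nat.factorial l)) *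
        ∏ i ∈ Finset.range l, (Real.logb 2 m / 2 - (i : ℝ))
      ≤ ∑ A ∈ S, ((A.card.choose l : ℕ) : ℝ) := by
  classical
  subst hm
  have hSne : S.Nonempty := Finset.card_pos.1 (by omega)
  have hm0 : (0:ℝ) < (S.card:ℝ) := by exact_mod_cast Finset.card_pos.2 hSne
  have hfac : (0:ℝ) < (Nat.factorial l : ℝ) := by exact_mod_cast Nat.factorial_pos l
  have havg := ReimerAux.reimer hSne huc
  set L := Real.logb 2 (S.card:ℝ) / 2 with hLdef
  -- Jensen
  have hconv := ReimerAux.Qm_convex l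
  have hjen := hconv.map_sum_le (t := S) (w := fun _ => 1/(S.card:ℝ))
      (p := fun A => (A.card : ℝ)) (fun i _ => by positivity)
      (by rw [Finset.sum_const, nsmul_eq_mul]; field_simp)
      (fun i _ => Set.mem_univ _)
  simp only [smul_eq_mul] at hjen
  have havg_eq : ∑ A ∈ S, 1/(S.card:ℝ) * (A.card:ℝ)
      = (∑ A ∈ S, (A.card:ℝ)) / (S.card:ℝ) := by
    rw [← Finset.mul_sum]; ring
  rw [havg_eq] at hjen
  -- L ≤ avg
  have hLavg : L ≤ (∑ A ∈ S, (A.card:ℝ)) / (S.card:ℝ) := by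
    rw [le_div_iff₀ hm0, hLdef]
    calc Real.logb 2 (S.card:ℝ) / 2 * (S.card:ℝ)
        = (S.card:ℝ) * Real.logb 2 (S.card:ℝ) / 2 := by ring
      _ ≤ _ := havg
  have hmonoQ := ReimerAux.Qm_monotone l hLavg
  -- rewrite the sum of Qm values
  have hsumQ : ∑ A ∈ S, 1/(S.card:ℝ) * ReimerAux.Qm l ((A.card:ℝ))
      = 1/(S.card:ℝ) * (Nat.factorial l : ℝ) * ∑ A ∈ S, ((A.card.choose l : ℕ) : ℝ) := by
    calc ∑ A ∈ S, 1/(S.card:ℝ) * ReimerAux.Qm l ((A.card:ℝ))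
        = ∑ A ∈ S, 1/(S.card:ℝ) * (Nat.factorial l : ℝ) * ((A.card.choose l : ℕ) : ℝ) := by
          apply Finset.sum_congr rfl
          intro A _
          rw [ReimerAux.Qm_natCast l hl A.card]
          push_cast
          ring
      _ = _ := by rw [mul_assoc, ← Finset.mul_sum, ← mul_assoc]
  rw [hsumQ] at hjen
  -- Qm at L equals the product
  have hQL : ReimerAux.Qm l L = ∏ i ∈ Finset.range l, (L - (i:ℝ)) := by
    unfold ReimerAux.Qm
    have hmax : max L ((l:ℝ)-1) = L := max_eq_left (by linarith [hlog])
    rw [hmax]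
  have hchain : ReimerAux.Qm l L
      ≤ 1/(S.card:ℝ) * (Nat.factorial l : ℝ) * ∑ A ∈ S, ((A.card.choose l : ℕ) : ℝ) :=
    le_trans hmonoQ hjen
  rw [hQL] at hchain
  -- final algebra
  have hfinal := mul_le_mul_of_nonneg_left hchain
    (by positivity : (0:ℝ) ≤ (S.card:ℝ) / (Nat.factorial l : ℝ))
  calc (S.card : ℝ) * ((1 : ℝ) / (Nat.factorial l : ℝ)) * ∏ i ∈ Finset.range l, (L - (i:ℝ))
      = (S.card:ℝ) / (Nat.factorial l : ℝ) * ∏ i ∈ Finset.range l, (L - (i:ℝ)) := by ring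
    _ ≤ (S.card:ℝ) / (Nat.factorial l : ℝ)
        * (1/(S.card:ℝ) * (Nat.factorial l : ℝ) * ∑ A ∈ S, ((A.card.choose l : ℕ) : ℝ)) :=
        hfinal
    _ = ∑ A ∈ S, ((A.card.choose l : ℕ) : ℝ) := by
        field_simp
end
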